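/- arXiv:1009.5490 — 7 statements merged into one kernel-verified Lean document; each statement's English description precedes it below -/
import Mathlib

section
/- Let f, g : ℝ × ℝ → ℝ be C² functions, let ε ∈ ℝ, and suppose f is a solution of the Born-Infeld equation on ℝ². Assume that (i) for all (x,t), g(x·cos ε − f(x,t)·sin ε, t) = x·sin ε + f(x,t)·cos ε, (ii) for all (x,t), cos ε − (∂f/∂x)(x,t)·sin ε ≠ 0, and (iii) for every (y,t) ∈ ℝ² there exists x with y = x·cos ε − f(x,t)·sin ε. Then g is a solution of the Born-Infeld equation on ℝ². (This expresses the rotation symmetry in the (x,u)-plane generated by v₅ = −u∂_x + x∂_u.) -/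
/-- Partial derivative with respect to the first variable `x`. -/
noncomputable def px (u : ℝ × ℝ → ℝ) (p : ℝ × ℝ) : ℝ := fderiv ℝ u p (1, 0)

/-- Partial derivative with respect to the second variable `t`. -/
noncomputable def pt (u : ℝ × ℝ → ℝ) (p : ℝ × ℝ) : ℝ := fderiv ℝ u p (0, 1)

/-- `u` is a (C²) solution of the Born-Infeld equation
`(1 - u_t²)·u_xx + 2·u_x·u_t·u_xt - (1 + u_x²)·u_tt = 0` on the set `Ω`:
`u` is C² on a neighborhood of `Ω` and the equation holds at every point of `Ω`. -/
def IsBISolution (u : ℝ × ℝ → ℝ) (Ω : Set (ℝ × ℝ)) : Prop :=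
  (∃ V : Set (ℝ × ℝ), IsOpen V ∧ Ω ⊆ V ∧ ContDiffOn ℝ 2 u V) ∧
  ∀ p ∈ Ω,
    (1 - pt u p ^ 2) * px (px u) p + 2 * px u p * pt u p * px (pt u) p
      - (1 + px u p ^ 2) * pt (pt u) p = 0

lemma clm1_pair (L : ℝ × ℝ →L[ℝ] ℝ) (x y : ℝ) :
    L (x, y) = x * L (1, 0) + y * L (0, 1) := by
  have hw : ((x, y) : ℝ × ℝ) = x • ((1 : ℝ), (0 : ℝ)) + y • ((0 : ℝ), (1 : ℝ)) := by
    ext <;> simp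
  rw [hw, map_add, map_smul, map_smul]; simp

lemma clm2_pair (L : ℝ × ℝ →L[ℝ] (ℝ × ℝ →L[ℝ] ℝ)) (x y : ℝ) (v : ℝ × ℝ) :
    L (x, y) v = x * L (1, 0) v + y * L (0, 1) v := by
  have hw : ((x, y) : ℝ × ℝ) = x • ((1 : ℝ), (0 : ℝ)) + y • ((0 : ℝ), (1 : ℝ)) := by
    ext <;> simp
  rw [hw, map_add, map_smul, map_smul]; simp

lemma bi_key_algebra (a b A B C s c G1 G2 Gxx G21 Gtt : ℝ)
    (hsc : s ^ 2 + c ^ 2 = 1)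
    (hD : c - a * s ≠ 0)
    (feq : (1 - b ^ 2) * A + 2 * a * b * B - (1 + a ^ 2) * C = 0)
    (E0 : G1 * (c - a * s) = s + a * c)
    (J2 : -(b * s) * G1 + G2 = b * c)
    (E1 : -(G1 * s * A) + (c - a * s) ^ 2 * Gxx = c * A)
    (E2 : -(G1 * s * B) + (c - a * s) * (-(b * s) * Gxx + G21) = c * B)
    (E3 : -(G2 * s * B) + (c - a * s) * (-(b * s) * G21 + Gtt) = C) :
    (1 - G2 ^ 2) * Gxx + 2 * G1 * G2 * G21 - (1 + G1 ^ 2) * Gtt = 0 := by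
  have hG2D : G2 * (c - a * s) = b := by
    linear_combination (c - a * s) * J2 + (b * s) * E0 + b * hsc
  have hGxx : Gxx * (c - a * s) ^ 3 = A := by
    linear_combination (c - a * s) * E1 + A * s * E0 + A * hsc
  have hG21 : G21 * (c - a * s) ^ 3 = B * (c - a * s) + A * b * s := by
    linear_combination (c - a * s) ^ 2 * E2 + (b * s) * hGxx + (B * s * (c - a * s)) * E0
      + (B * (c - a * s)) * hsc
  have hGtt : Gtt * (c - a * s) ^ 3
      = C * (c - a * s) ^ 2 + 2 * b * B * s * (c - a * s) + A * b ^ 2 * s ^ 2 := by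
    linear_combination (c - a * s) ^ 2 * E3 + (b * s) * hG21 + (B * s * (c - a * s)) * hG2D
  have h5 : ((1 - G2 ^ 2) * Gxx + 2 * G1 * G2 * G21 - (1 + G1 ^ 2) * Gtt) * (c - a * s) ^ 5
      = 0 := by
    linear_combination ((c - a * s) ^ 2 - b ^ 2) * hGxx
      + (-(Gxx * (c - a * s) ^ 3) * (G2 * (c - a * s) + b)) * hG2D
      + (2 * G2 * G21 * (c - a * s) ^ 4) * E0
      + (2 * (s + a * c) * G21 * (c - a * s) ^ 3) * hG2D
      + (2 * (s + a * c) * b) * hG21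
      + (-((c - a * s) ^ 2) - (s + a * c) ^ 2) * hGtt
      + (-(Gtt * (c - a * s) ^ 3) * (G1 * (c - a * s) + (s + a * c))) * E0
      + (c - a * s) ^ 2 * feq
      + (A * b ^ 2 - (1 + a ^ 2) * (C * (c - a * s) ^ 2 + 2 * b * B * s * (c - a * s)
          + A * b ^ 2 * s ^ 2)) * hsc
  exact (mul_eq_zero.mp h5).resolve_right (pow_ne_zero 5 hD)

/-- Rotation symmetry in the `(x,u)`-plane, `v₅ = −u∂ₓ + x∂_u`,
of the Born-Infeld equation. -/
theorem bornInfeld_rotation_symmetry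
    (f g : ℝ × ℝ → ℝ) (hf : ContDiff ℝ 2 f) (hg : ContDiff ℝ 2 g) (ε : ℝ)
    (hsol : IsBISolution f Set.univ)
    (hrel : ∀ x t : ℝ,
      g (x * Real.cos ε - f (x, t) * Real.sin ε, t)
        = x * Real.sin ε + f (x, t) * Real.cos ε)
    (hnd : ∀ x t : ℝ, Real.cos ε - px f (x, t) * Real.sin ε ≠ 0)
    (hsurj : ∀ y t : ℝ, ∃ x : ℝ, y = x * Real.cos ε - f (x, t) * Real.sin ε) :
    IsBISolution g Set.univ := by
  constructor
  · exact ⟨Set.univ, isOpen_univ, subset_rfl, hg.contDiffOn⟩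
  rintro ⟨y, t⟩ -
  obtain ⟨x, hx⟩ := hsurj y t
  -- basic facts
  have hsc : Real.sin ε ^ 2 + Real.cos ε ^ 2 = 1 := Real.sin_sq_add_cos_sq ε
  have hfd : Differentiable ℝ f := hf.differentiable two_ne_zero
  have hgd : Differentiable ℝ g := hg.differentiable two_ne_zero
  have hf'd : Differentiable ℝ (fderiv ℝ f) :=
    (hf.fderiv_right (by norm_num : (1 : WithTop ℕ∞) + 1 ≤ 2)).differentiable one_ne_zero
  have hg'd : Differentiable ℝ (fderiv ℝ g) :=
    (hg.fderiv_right (by norm_num : (1 : WithTop ℕ∞) + 1 ≤ 2)).differentiable one_ne_zero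
  set c := Real.cos ε with hcos
  set s := Real.sin ε with hsin
  set p : ℝ × ℝ := (x, t) with hp
  have hfd2 : ∀ (q v : ℝ × ℝ),
      HasFDerivAt (fun r => fderiv ℝ f r v)
        ((ContinuousLinearMap.apply ℝ ℝ v).comp (fderiv ℝ (fderiv ℝ f) q)) q :=
    fun q v => (ContinuousLinearMap.apply ℝ ℝ v).hasFDerivAt.comp q (hf'd q).hasFDerivAt
  have hgd2 : ∀ (q v : ℝ × ℝ),
      HasFDerivAt (fun r => fderiv ℝ g r v)
        ((ContinuousLinearMap.apply ℝ ℝ v).comp (fderiv ℝ (fderiv ℝ g) q)) q :=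
    fun q v => (ContinuousLinearMap.apply ℝ ℝ v).hasFDerivAt.comp q (hg'd q).hasFDerivAt
  have hsymf : ∀ q : ℝ × ℝ, fderiv ℝ (fderiv ℝ f) q (1, 0) (0, 1)
      = fderiv ℝ (fderiv ℝ f) q (0, 1) (1, 0) :=
    fun q => second_derivative_symmetric (fun y => (hfd y).hasFDerivAt) (hf'd q).hasFDerivAt _ _
  have hsymg : ∀ q : ℝ × ℝ, fderiv ℝ (fderiv ℝ g) q (1, 0) (0, 1)
      = fderiv ℝ (fderiv ℝ g) q (0, 1) (1, 0) :=
    fun q => second_derivative_symmetric (fun y => (hgd y).hasFDerivAt) (hg'd q).hasFDerivAt _ _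
  set F : ℝ × ℝ → ℝ × ℝ := fun q => (q.1 * c - f q * s, q.2) with hF
  set F' : (ℝ × ℝ) → (ℝ × ℝ →L[ℝ] ℝ × ℝ) := fun q =>
    ((c • ContinuousLinearMap.fst ℝ ℝ ℝ - s • fderiv ℝ f q).prod
      (ContinuousLinearMap.snd ℝ ℝ ℝ)) with hF'
  have hFd : ∀ q, HasFDerivAt F (F' q) q := fun q =>
    ((hasFDerivAt_fst.mul_const c).sub ((hfd q).hasFDerivAt.mul_const s)).prodMk hasFDerivAt_snd
  have hrel' : (fun q => g (F q)) = fun q : ℝ × ℝ => q.1 * s + f q * c := by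
    funext q; simpa using hrel q.1 q.2
  have hEq : ∀ q, (fderiv ℝ g (F q)).comp (F' q)
      = s • ContinuousLinearMap.fst ℝ ℝ ℝ + c • fderiv ℝ f q := by
    intro q
    have h2 : HasFDerivAt (fun r : ℝ × ℝ => r.1 * s + f r * c)
        (s • ContinuousLinearMap.fst ℝ ℝ ℝ + c • fderiv ℝ f q) q :=
      (hasFDerivAt_fst.mul_const s).add ((hfd q).hasFDerivAt.mul_const c)
    rw [← hrel'] at h2
    exact (((hgd (F q)).hasFDerivAt).comp q (hFd q)).unique h2
  have J1 : ∀ q, fderiv ℝ g (F q) (1, 0) * (c - fderiv ℝ f q (1, 0) * s)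
      = s + fderiv ℝ f q (1, 0) * c := by
    intro q
    have h := DFunLike.congr_fun (hEq q) ((1 : ℝ), (0 : ℝ))
    simp only [ContinuousLinearMap.comp_apply, ContinuousLinearMap.add_apply,
      ContinuousLinearMap.smul_apply, ContinuousLinearMap.prod_apply,
      ContinuousLinearMap.sub_apply, ContinuousLinearMap.coe_fst',
      ContinuousLinearMap.coe_snd', smul_eq_mul, hF'] at h
    rw [clm1_pair] at h
    ring_nf at h ⊢
    linarith [h]
  have J2 : ∀ q, -(fderiv ℝ f q (0, 1) * s) * fderiv ℝ g (F q) (1, 0)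
      + fderiv ℝ g (F q) (0, 1) = fderiv ℝ f q (0, 1) * c := by
    intro q
    have h := DFunLike.congr_fun (hEq q) ((0 : ℝ), (1 : ℝ))
    simp only [ContinuousLinearMap.comp_apply, ContinuousLinearMap.add_apply,
      ContinuousLinearMap.smul_apply, ContinuousLinearMap.prod_apply,
      ContinuousLinearMap.sub_apply, ContinuousLinearMap.coe_fst',
      ContinuousLinearMap.coe_snd', smul_eq_mul, hF'] at h
    rw [clm1_pair] at h
    ring_nf at h ⊢
    linarith [h]
  have J3 : ∀ q, fderiv ℝ g (F q) (0, 1) * (c - fderiv ℝ f q (1, 0) * s)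
      = fderiv ℝ f q (0, 1) := by
    intro q
    linear_combination (c - fderiv ℝ f q (1, 0) * s) * J2 q
      + (fderiv ℝ f q (0, 1) * s) * J1 q + fderiv ℝ f q (0, 1) * hsc
  -- second-order identities at p
  have hu1 : HasFDerivAt (fun q => fderiv ℝ g (F q) (1, 0))
      (((ContinuousLinearMap.apply ℝ ℝ ((1 : ℝ), (0 : ℝ))).comp
        (fderiv ℝ (fderiv ℝ g) (F p))).comp (F' p)) p :=
    (hgd2 (F p) ((1 : ℝ), (0 : ℝ))).comp p (hFd p)
  have hu2 : HasFDerivAt (fun q => fderiv ℝ g (F q) (0, 1))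
      (((ContinuousLinearMap.apply ℝ ℝ ((0 : ℝ), (1 : ℝ))).comp
        (fderiv ℝ (fderiv ℝ g) (F p))).comp (F' p)) p :=
    (hgd2 (F p) ((0 : ℝ), (1 : ℝ))).comp p (hFd p)
  have hDf : HasFDerivAt (fun q => c - fderiv ℝ f q (1, 0) * s)
      (-(s • ((ContinuousLinearMap.apply ℝ ℝ ((1 : ℝ), (0 : ℝ))).comp
        (fderiv ℝ (fderiv ℝ f) p)))) p :=
    ((hfd2 p ((1 : ℝ), (0 : ℝ))).mul_const s).const_sub c
  have hEq2 := (hu1.mul hDf).unique (by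
    rw [show ((fun q => fderiv ℝ g (F q) (1, 0)) * fun q => c - fderiv ℝ f q (1, 0) * s)
        = fun q => s + fderiv ℝ f q (1, 0) * c from funext J1]
    exact ((hfd2 p ((1 : ℝ), (0 : ℝ))).mul_const c).const_add s)
  have hEq3 := (hu2.mul hDf).unique (by
    rw [show ((fun q => fderiv ℝ g (F q) (0, 1)) * fun q => c - fderiv ℝ f q (1, 0) * s)
        = fun q => fderiv ℝ f q (0, 1) from funext J3]
    exact hfd2 p ((0 : ℝ), (1 : ℝ)))
  have E1 := DFunLike.congr_fun hEq2 ((1 : ℝ), (0 : ℝ))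
  have E2 := DFunLike.congr_fun hEq2 ((0 : ℝ), (1 : ℝ))
  have E3 := DFunLike.congr_fun hEq3 ((0 : ℝ), (1 : ℝ))
  simp only [ContinuousLinearMap.comp_apply, ContinuousLinearMap.add_apply,
    ContinuousLinearMap.smul_apply, ContinuousLinearMap.prod_apply,
    ContinuousLinearMap.sub_apply, ContinuousLinearMap.neg_apply,
    ContinuousLinearMap.apply_apply, ContinuousLinearMap.coe_fst',
    ContinuousLinearMap.coe_snd', smul_eq_mul, hF'] at E1 E2 E3
  rw [clm2_pair _ (c * 1 - s * fderiv ℝ f p (1, 0)) 0] at E1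
  rw [clm2_pair _ (c * 0 - s * fderiv ℝ f p (0, 1)) 1] at E2
  rw [clm2_pair _ (c * 0 - s * fderiv ℝ f p (0, 1)) 1] at E3
  -- the f equation in raw form
  have feq := hsol.2 p trivial
  have hpx_f : px f = fun r => fderiv ℝ f r (1, 0) := rfl
  have hpt_f : pt f = fun r => fderiv ℝ f r (0, 1) := rfl
  have hpx_g : px g = fun r => fderiv ℝ g r (1, 0) := rfl
  have hpt_g : pt g = fun r => fderiv ℝ g r (0, 1) := rfl
  have feq' : (1 - fderiv ℝ f p (0, 1) ^ 2) * fderiv ℝ (fderiv ℝ f) p (1, 0) (1, 0)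
      + 2 * fderiv ℝ f p (1, 0) * fderiv ℝ f p (0, 1) * fderiv ℝ (fderiv ℝ f) p (0, 1) (1, 0)
      - (1 + fderiv ℝ f p (1, 0) ^ 2) * fderiv ℝ (fderiv ℝ f) p (0, 1) (0, 1) = 0 := by
    rw [← hsymf]
    simpa only [px, pt, hpx_f, hpt_f, (hfd2 p ((1 : ℝ), (0 : ℝ))).fderiv,
      (hfd2 p ((0 : ℝ), (1 : ℝ))).fderiv, ContinuousLinearMap.comp_apply,
      ContinuousLinearMap.apply_apply] using feq
  -- the claimed point equals F p
  have hpF : ((y, t) : ℝ × ℝ) = F p := by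
    rw [hF, hp]
    simp only []
    rw [Prod.mk.injEq]
    exact ⟨hx, rfl⟩
  rw [hpF]
  -- the goal in raw form
  have goal' : (1 - fderiv ℝ g (F p) (0, 1) ^ 2) * fderiv ℝ (fderiv ℝ g) (F p) (1, 0) (1, 0)
      + 2 * fderiv ℝ g (F p) (1, 0) * fderiv ℝ g (F p) (0, 1)
        * fderiv ℝ (fderiv ℝ g) (F p) (0, 1) (1, 0)
      - (1 + fderiv ℝ g (F p) (1, 0) ^ 2) * fderiv ℝ (fderiv ℝ g) (F p) (0, 1) (0, 1) = 0 := by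
    have hD : c - fderiv ℝ f p (1, 0) * s ≠ 0 := by
      have := hnd x t
      simpa only [px, ← hp] using this
    refine bi_key_algebra (fderiv ℝ f p (1, 0)) (fderiv ℝ f p (0, 1))
      (fderiv ℝ (fderiv ℝ f) p (1, 0) (1, 0)) (fderiv ℝ (fderiv ℝ f) p (0, 1) (1, 0))
      (fderiv ℝ (fderiv ℝ f) p (0, 1) (0, 1)) s c
      (fderiv ℝ g (F p) (1, 0)) (fderiv ℝ g (F p) (0, 1))
      (fderiv ℝ (fderiv ℝ g) (F p) (1, 0) (1, 0)) (fderiv ℝ (fderiv ℝ g) (F p) (0, 1) (1, 0))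
      (fderiv ℝ (fderiv ℝ g) (F p) (0, 1) (0, 1)) hsc hD feq' ?_ ?_ ?_ ?_ ?_
    · linear_combination J1 p
    · linear_combination J2 p
    · linear_combination E1
    · linear_combination E2
    · linear_combination E3 + (c - fderiv ℝ f p (1, 0) * s) * fderiv ℝ f p (0, 1) * s * hsymg (F p)
  rw [show px (px g) (F p) = fderiv ℝ (fderiv ℝ g) (F p) (1, 0) (1, 0) by
      simp only [px, hpx_g, (hgd2 (F p) ((1 : ℝ), (0 : ℝ))).fderiv,
        ContinuousLinearMap.comp_apply, ContinuousLinearMap.apply_apply],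
    show px (pt g) (F p) = fderiv ℝ (fderiv ℝ g) (F p) (1, 0) (0, 1) by
      simp only [px, pt, hpt_g, (hgd2 (F p) ((0 : ℝ), (1 : ℝ))).fderiv,
        ContinuousLinearMap.comp_apply, ContinuousLinearMap.apply_apply],
    show pt (pt g) (F p) = fderiv ℝ (fderiv ℝ g) (F p) (0, 1) (0, 1) by
      simp only [pt, hpt_g, (hgd2 (F p) ((0 : ℝ), (1 : ℝ))).fderiv,
        ContinuousLinearMap.comp_apply, ContinuousLinearMap.apply_apply],
    hsymg (F p)]
  simp only [px, pt]
  linear_combination goal'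
end

section
/- Let f, g : ℝ × ℝ → ℝ be C² functions, let ε ∈ ℝ, and suppose f is a solution of the Born-Infeld equation on ℝ². Assume that (i) for all (x,t), g(x, t·cosh ε + f(x,t)·sinh ε) = t·sinh ε + f(x,t)·cosh ε, (ii) for all (x,t), cosh ε + (∂f/∂t)(x,t)·sinh ε ≠ 0, and (iii) for every (x,s) ∈ ℝ² there exists t with s = t·cosh ε + f(x,t)·sinh ε. Then g is a solution of the Born-Infeld equation on ℝ². (This expresses the hyperbolic rotation symmetry in the (t,u)-plane generated by v₆ = u∂_t + t∂_u.) -/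
/- ### Auxiliary lemmas -/

lemma fderiv_pair_eval (u : ℝ × ℝ → ℝ) (q : ℝ × ℝ) (a b : ℝ) :
    fderiv ℝ u q (a, b) = a * px u q + b * pt u q := by
  have h : ((a, b) : ℝ × ℝ) = a • ((1:ℝ), (0:ℝ)) + b • ((0:ℝ), (1:ℝ)) := by
    simp [Prod.ext_iff]
  rw [h, map_add, map_smul, map_smul, px, pt, smul_eq_mul, smul_eq_mul]

lemma contDiff_pt {u : ℝ × ℝ → ℝ} (hu : ContDiff ℝ 2 u) : ContDiff ℝ 1 (pt u) := by
  have : ContDiff ℝ 1 (fun p : ℝ × ℝ => fderiv ℝ u p (0, 1)) :=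
    (hu.fderiv_right (by norm_num)).clm_apply contDiff_const
  exact this

lemma contDiff_px {u : ℝ × ℝ → ℝ} (hu : ContDiff ℝ 2 u) : ContDiff ℝ 1 (px u) := by
  have : ContDiff ℝ 1 (fun p : ℝ × ℝ => fderiv ℝ u p (1, 0)) :=
    (hu.fderiv_right (by norm_num)).clm_apply contDiff_const
  exact this

lemma pt_mul' {u v : ℝ × ℝ → ℝ} {p : ℝ × ℝ} (hu : DifferentiableAt ℝ u p)
    (hv : DifferentiableAt ℝ v p) :
    pt (fun q => u q * v q) p = pt u p * v p + u p * pt v p := by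
  unfold pt
  rw [fderiv_fun_mul hu hv]
  simp [smul_eq_mul]
  ring

lemma px_mul' {u v : ℝ × ℝ → ℝ} {p : ℝ × ℝ} (hu : DifferentiableAt ℝ u p)
    (hv : DifferentiableAt ℝ v p) :
    px (fun q => u q * v q) p = px u p * v p + u p * px v p := by
  unfold px
  rw [fderiv_fun_mul hu hv]
  simp [smul_eq_mul]
  ring

lemma pt_add' {u v : ℝ × ℝ → ℝ} {p : ℝ × ℝ} (hu : DifferentiableAt ℝ u p)
    (hv : DifferentiableAt ℝ v p) :
    pt (fun q => u q + v q) p = pt u p + pt v p := by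
  unfold pt
  rw [fderiv_fun_add hu hv]
  simp

lemma px_add' {u v : ℝ × ℝ → ℝ} {p : ℝ × ℝ} (hu : DifferentiableAt ℝ u p)
    (hv : DifferentiableAt ℝ v p) :
    px (fun q => u q + v q) p = px u p + px v p := by
  unfold px
  rw [fderiv_fun_add hu hv]
  simp

lemma pt_const_add_const_mul {u : ℝ × ℝ → ℝ} {p : ℝ × ℝ} (hu : DifferentiableAt ℝ u p)
    (c d : ℝ) : pt (fun q => c + d * u q) p = d * pt u p := by
  unfold pt
  rw [fderiv_const_add, fderiv_const_mul hu]
  simp [smul_eq_mul]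

lemma px_const_add_const_mul {u : ℝ × ℝ → ℝ} {p : ℝ × ℝ} (hu : DifferentiableAt ℝ u p)
    (c d : ℝ) : px (fun q => c + d * u q) p = d * px u p := by
  unfold px
  rw [fderiv_const_add, fderiv_const_mul hu]
  simp [smul_eq_mul]

lemma pt_const_mul {u : ℝ × ℝ → ℝ} {p : ℝ × ℝ} (hu : DifferentiableAt ℝ u p)
    (c : ℝ) : pt (fun q => c * u q) p = c * pt u p := by
  unfold pt
  rw [fderiv_const_mul hu]
  simp [smul_eq_mul]

lemma px_const_mul {u : ℝ × ℝ → ℝ} {p : ℝ × ℝ} (hu : DifferentiableAt ℝ u p)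
    (c : ℝ) : px (fun q => c * u q) p = c * px u p := by
  unfold px
  rw [fderiv_const_mul hu]
  simp [smul_eq_mul]

/-- Second derivatives commute for `C²` functions. -/
lemma symm2 {u : ℝ × ℝ → ℝ} (hu : ContDiff ℝ 2 u) (p : ℝ × ℝ) :
    px (pt u) p = pt (px u) p := by
  have hder : ContDiff ℝ 1 (fderiv ℝ u) := hu.fderiv_right (by norm_num)
  have hd : HasFDerivAt (fderiv ℝ u) (fderiv ℝ (fderiv ℝ u) p) p :=
    ((hder.differentiable one_ne_zero) p).hasFDerivAt
  have hsymm := (hu.contDiffAt (x := p)).isSymmSndFDerivAt (by simp [minSmoothness_of_isRCLikeNormedField])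
  have key : ∀ v : ℝ × ℝ, HasFDerivAt (fun q => fderiv ℝ u q v)
      (((fderiv ℝ u p).comp 0) + (fderiv ℝ (fderiv ℝ u) p).flip v) p := fun v =>
    hd.clm_apply (hasFDerivAt_const v p)
  have e1 : px (pt u) p = fderiv ℝ (fderiv ℝ u) p (1, 0) (0, 1) := by
    have := (key (0, 1)).fderiv
    show fderiv ℝ (fun q => fderiv ℝ u q (0,1)) p (1,0) = _
    rw [this]
    simp
  have e2 : pt (px u) p = fderiv ℝ (fderiv ℝ u) p (0, 1) (1, 0) := by
    have := (key (1, 0)).fderiv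
    show fderiv ℝ (fun q => fderiv ℝ u q (1,0)) p (0,1) = _
    rw [this]
    simp
  rw [e1, e2, hsymm (1,0) (0,1)]

/-- Chain rule for `u` composed with the map `q ↦ (q.1, q.2·ch + f q·sh)`. -/
lemma comp_chain (f u : ℝ × ℝ → ℝ) (ch sh : ℝ) (p : ℝ × ℝ)
    (hfd : DifferentiableAt ℝ f p)
    (hud : DifferentiableAt ℝ u (p.1, p.2 * ch + f p * sh)) :
    px (fun q => u (q.1, q.2 * ch + f q * sh)) p
      = px u (p.1, p.2 * ch + f p * sh)
        + sh * px f p * pt u (p.1, p.2 * ch + f p * sh) ∧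
    pt (fun q => u (q.1, q.2 * ch + f q * sh)) p
      = (ch + sh * pt f p) * pt u (p.1, p.2 * ch + f p * sh) := by
  set q : ℝ × ℝ := (p.1, p.2 * ch + f p * sh) with hq
  have h2 : HasFDerivAt (fun q : ℝ × ℝ => q.2 * ch + f q * sh)
      (ch • ContinuousLinearMap.snd ℝ ℝ ℝ + sh • fderiv ℝ f p) p :=
    ((hasFDerivAt_snd).mul_const ch).add (hfd.hasFDerivAt.mul_const sh)
  have hΨ : HasFDerivAt (fun q : ℝ × ℝ => (q.1, q.2 * ch + f q * sh))
      ((ContinuousLinearMap.fst ℝ ℝ ℝ).prod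
        (ch • ContinuousLinearMap.snd ℝ ℝ ℝ + sh • fderiv ℝ f p)) p :=
    HasFDerivAt.prodMk hasFDerivAt_fst h2
  have hcomp : HasFDerivAt (fun q => u (q.1, q.2 * ch + f q * sh))
      ((fderiv ℝ u q).comp ((ContinuousLinearMap.fst ℝ ℝ ℝ).prod
        (ch • ContinuousLinearMap.snd ℝ ℝ ℝ + sh • fderiv ℝ f p))) p :=
    HasFDerivAt.comp p hud.hasFDerivAt hΨ
  constructor
  · have : px (fun q => u (q.1, q.2 * ch + f q * sh)) p
        = fderiv ℝ u q (1, ch * 0 + sh * px f p) := by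
      rw [px, hcomp.fderiv]
      simp [px]
    rw [this, fderiv_pair_eval]
    ring
  · have : pt (fun q => u (q.1, q.2 * ch + f q * sh)) p
        = fderiv ℝ u q (0, ch * 1 + sh * pt f p) := by
      rw [pt, hcomp.fderiv]
      simp [pt]
    rw [this, fderiv_pair_eval]
    ring

/-- Derivatives of the right-hand side `q ↦ q.2·sh + f q·ch`. -/
lemma lin_eval (f : ℝ × ℝ → ℝ) (ch sh : ℝ) (p : ℝ × ℝ) (hfd : DifferentiableAt ℝ f p) :
    px (fun q : ℝ × ℝ => q.2 * sh + f q * ch) p = ch * px f p ∧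
    pt (fun q : ℝ × ℝ => q.2 * sh + f q * ch) p = sh + ch * pt f p := by
  have h : HasFDerivAt (fun q : ℝ × ℝ => q.2 * sh + f q * ch)
      (sh • ContinuousLinearMap.snd ℝ ℝ ℝ + ch • fderiv ℝ f p) p :=
    ((hasFDerivAt_snd).mul_const sh).add (hfd.hasFDerivAt.mul_const ch)
  constructor
  · rw [px, h.fderiv]; simp [px]
  · rw [pt, h.fderiv]; simp [pt]

lemma bi_algebra_key (sh ch a b r s2 t2 P Q R S T : ℝ)
    (hcs : ch ^ 2 - sh ^ 2 = 1)
    (hA : ch + sh * a ≠ 0)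
    (E1 : (ch + sh * a) * P = sh + ch * a)
    (E2 : Q + sh * b * P = ch * b)
    (E3 : sh * r * P + (ch + sh * a) * ((ch + sh * a) * R) = ch * r)
    (E4 : sh * s2 * P + (ch + sh * a) * (S + sh * b * R) = ch * s2)
    (E5 : T + sh * b * S + (sh * t2 * P + sh * b * (S + sh * b * R)) = ch * t2)
    (Ef : (1 - a ^ 2) * t2 + 2 * b * a * s2 - (1 + b ^ 2) * r = 0) :
    (1 - P ^ 2) * T + 2 * Q * P * S - (1 + Q ^ 2) * R = 0 := by
  have hQ' : Q * (ch + sh * a) = b := by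
    linear_combination (ch + sh * a) * E2 - sh * b * E1 + b * hcs
  have hR' : R * (ch + sh * a) ^ 3 = r := by
    linear_combination (ch + sh * a) * E3 - sh * r * E1 + r * hcs
  have hS' : S * (ch + sh * a) ^ 3 = s2 * (ch + sh * a) - b * sh * r := by
    linear_combination (ch + sh * a) ^ 2 * E4 - b * sh * hR' - s2 * sh * (ch + sh * a) * E1
      + s2 * (ch + sh * a) * hcs
  have hT' : T * (ch + sh * a) ^ 3
      = t2 * (ch + sh * a) ^ 2 - 2 * b * sh * s2 * (ch + sh * a) + b ^ 2 * sh ^ 2 * r := by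
    linear_combination (ch + sh * a) ^ 3 * E5 - 2 * b * sh * hS' - b ^ 2 * sh ^ 2 * hR'
      - t2 * sh * (ch + sh * a) ^ 2 * E1 + t2 * (ch + sh * a) ^ 2 * hcs
  have h5 : ((1 - P ^ 2) * T + 2 * Q * P * S - (1 + Q ^ 2) * R) * (ch + sh * a) ^ 5 = 0 := by
    linear_combination (1 - P ^ 2) * (ch + sh * a) ^ 2 * hT'
      + 2 * Q * P * (ch + sh * a) ^ 2 * hS'
      - (1 + Q ^ 2) * (ch + sh * a) ^ 2 * hR'
      + (-(P * (ch + sh * a) + (sh + ch * a))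
          * (t2 * (ch + sh * a) ^ 2 - 2 * b * sh * s2 * (ch + sh * a) + b ^ 2 * sh ^ 2 * r)
         + 2 * b * (s2 * (ch + sh * a) - b * sh * r)) * E1
      + (2 * P * (ch + sh * a) * (s2 * (ch + sh * a) - b * sh * r)
         - (Q * (ch + sh * a) + b) * r) * hQ'
      + (ch + sh * a) ^ 2 * Ef
      + (t2 * ch ^ 2 - 2 * b * s2 * sh * ch + b ^ 2 * r + b ^ 2 * r * sh ^ 2
         + 2 * a * t2 * sh * ch - 2 * a * b * s2 * sh ^ 2 - a ^ 2 * t2 * ch ^ 2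
         + a ^ 2 * t2 * sh ^ 2 + 2 * a ^ 2 * b * s2 * sh * ch - a ^ 2 * b ^ 2 * r * sh ^ 2
         - 2 * a ^ 3 * t2 * sh * ch + 2 * a ^ 3 * b * s2 * sh ^ 2 - a ^ 4 * t2 * sh ^ 2) * hcs
  exact (mul_eq_zero.mp h5).resolve_right (pow_ne_zero _ hA)

/-- Hyperbolic rotation symmetry in the `(t,u)`-plane, `v₆ = u∂_t + t∂_u`,
of the Born-Infeld equation. -/
theorem bornInfeld_hyperbolic_rotation_symmetry
    (f g : ℝ × ℝ → ℝ) (hf : ContDiff ℝ 2 f) (hg : ContDiff ℝ 2 g) (ε : ℝ)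
    (hsol : IsBISolution f Set.univ)
    (hrel : ∀ x t : ℝ,
      g (x, t * Real.cosh ε + f (x, t) * Real.sinh ε)
        = t * Real.sinh ε + f (x, t) * Real.cosh ε)
    (hnd : ∀ x t : ℝ, Real.cosh ε + pt f (x, t) * Real.sinh ε ≠ 0)
    (hsurj : ∀ x s : ℝ, ∃ t : ℝ, s = t * Real.cosh ε + f (x, t) * Real.sinh ε) :
    IsBISolution g Set.univ := by
  set ch := Real.cosh ε with hch
  set sh := Real.sinh ε with hsh
  have hcs : ch ^ 2 - sh ^ 2 = 1 := Real.cosh_sq_sub_sinh_sq ε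
  -- differentiability bookkeeping
  have hfd : Differentiable ℝ f := hf.differentiable two_ne_zero
  have hgd : Differentiable ℝ g := hg.differentiable two_ne_zero
  have hptf1 : Differentiable ℝ (pt f) := (contDiff_pt hf).differentiable one_ne_zero
  have hpxf1 : Differentiable ℝ (px f) := (contDiff_px hf).differentiable one_ne_zero
  have hptg1 : Differentiable ℝ (pt g) := (contDiff_pt hg).differentiable one_ne_zero
  have hpxg1 : Differentiable ℝ (px g) := (contDiff_px hg).differentiable one_ne_zero
  have hΨd : ∀ p : ℝ × ℝ, DifferentiableAt ℝ (fun q : ℝ × ℝ => (q.1, q.2 * ch + f q * sh)) p :=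
    fun p => DifferentiableAt.prodMk differentiableAt_fst
      ((differentiableAt_snd.mul_const ch).add ((hfd p).mul_const sh))
  have hPd : ∀ p : ℝ × ℝ, DifferentiableAt ℝ
      (fun q : ℝ × ℝ => pt g (q.1, q.2 * ch + f q * sh)) p :=
    fun p => DifferentiableAt.comp p (hptg1 _) (hΨd p)
  have hQd : ∀ p : ℝ × ℝ, DifferentiableAt ℝ
      (fun q : ℝ × ℝ => px g (q.1, q.2 * ch + f q * sh)) p :=
    fun p => DifferentiableAt.comp p (hpxg1 _) (hΨd p)
  -- the composed relation as an identity of functions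
  have hfun : (fun q : ℝ × ℝ => g (q.1, q.2 * ch + f q * sh))
      = fun q : ℝ × ℝ => q.2 * sh + f q * ch :=
    funext fun q => by simpa using hrel q.1 q.2
  -- first-order identities, valid everywhere
  have hE1 : ∀ p : ℝ × ℝ,
      (ch + sh * pt f p) * pt g (p.1, p.2 * ch + f p * sh) = sh + ch * pt f p := by
    intro p
    have h1 := (comp_chain f g ch sh p (hfd p) (hgd _)).2
    rw [hfun] at h1
    rw [(lin_eval f ch sh p (hfd p)).2] at h1
    exact h1.symm
  have hE2 : ∀ p : ℝ × ℝ,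
      px g (p.1, p.2 * ch + f p * sh)
        + sh * px f p * pt g (p.1, p.2 * ch + f p * sh) = ch * px f p := by
    intro p
    have h1 := (comp_chain f g ch sh p (hfd p) (hgd _)).1
    rw [hfun] at h1
    rw [(lin_eval f ch sh p (hfd p)).1] at h1
    exact h1.symm
  have hF1 : (fun p : ℝ × ℝ => (ch + sh * pt f p) * pt g (p.1, p.2 * ch + f p * sh))
      = fun p : ℝ × ℝ => sh + ch * pt f p := funext hE1
  have hF2 : (fun p : ℝ × ℝ => px g (p.1, p.2 * ch + f p * sh)
        + sh * px f p * pt g (p.1, p.2 * ch + f p * sh))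
      = fun p : ℝ × ℝ => ch * px f p := funext hE2
  constructor
  · exact ⟨Set.univ, isOpen_univ, subset_rfl, hg.contDiffOn⟩
  rintro ⟨x, s⟩ -
  obtain ⟨t, hst⟩ := hsurj x s
  subst hst
  set p0 : ℝ × ℝ := (x, t) with hp0
  set q : ℝ × ℝ := (x, t * ch + f (x, t) * sh) with hqdef
  have hq' : (p0.1, p0.2 * ch + f p0 * sh) = q := by simp [hp0, hqdef]
  -- E3 : t-derivative of hF1 at p0
  have E3 : sh * pt (pt f) p0 * pt g q
      + (ch + sh * pt f p0) * ((ch + sh * pt f p0) * pt (pt g) q)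
      = ch * pt (pt f) p0 := by
    have hL : pt (fun p : ℝ × ℝ =>
          (ch + sh * pt f p) * pt g (p.1, p.2 * ch + f p * sh)) p0
        = pt (fun p : ℝ × ℝ => sh + ch * pt f p) p0 := by rw [hF1]
    rw [pt_mul' (((hptf1 p0).const_mul sh).const_add ch) (hPd p0),
        pt_const_add_const_mul (hptf1 p0) ch sh,
        pt_const_add_const_mul (hptf1 p0) sh ch,
        (comp_chain f (pt g) ch sh p0 (hfd p0) (hptg1 _)).2] at hL
    rw [hq'] at hL
    exact hL
  -- E4 : x-derivative of hF1 at p0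
  have E4 : sh * px (pt f) p0 * pt g q
      + (ch + sh * pt f p0) * (px (pt g) q + sh * px f p0 * pt (pt g) q)
      = ch * px (pt f) p0 := by
    have hL : px (fun p : ℝ × ℝ =>
          (ch + sh * pt f p) * pt g (p.1, p.2 * ch + f p * sh)) p0
        = px (fun p : ℝ × ℝ => sh + ch * pt f p) p0 := by rw [hF1]
    rw [px_mul' (((hptf1 p0).const_mul sh).const_add ch) (hPd p0),
        px_const_add_const_mul (hptf1 p0) ch sh,
        px_const_add_const_mul (hptf1 p0) sh ch,
        (comp_chain f (pt g) ch sh p0 (hfd p0) (hptg1 _)).1] at hL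
    rw [hq'] at hL
    exact hL
  -- E5 : x-derivative of hF2 at p0
  have E5 : (px (px g) q + sh * px f p0 * pt (px g) q)
      + (sh * px (px f) p0 * pt g q
        + sh * px f p0 * (px (pt g) q + sh * px f p0 * pt (pt g) q))
      = ch * px (px f) p0 := by
    have hL : px (fun p : ℝ × ℝ => px g (p.1, p.2 * ch + f p * sh)
          + sh * px f p * pt g (p.1, p.2 * ch + f p * sh)) p0
        = px (fun p : ℝ × ℝ => ch * px f p) p0 := by rw [hF2]
    rw [px_add' (hQd p0) (((hpxf1 p0).const_mul sh).fun_mul (hPd p0)),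
        px_mul' ((hpxf1 p0).const_mul sh) (hPd p0),
        px_const_mul (hpxf1 p0) sh,
        px_const_mul (hpxf1 p0) ch,
        (comp_chain f (pt g) ch sh p0 (hfd p0) (hptg1 _)).1,
        (comp_chain f (px g) ch sh p0 (hfd p0) (hpxg1 _)).1] at hL
    rw [hq'] at hL
    exact hL
  -- symmetry of second derivatives of g
  have hsymg : pt (px g) q = px (pt g) q := (symm2 hg q).symm
  rw [hsymg] at E5
  -- the Born–Infeld equation for f at p0
  have hEf := hsol.2 p0 (Set.mem_univ _)
  -- symmetry of second derivatives of f to match shapes: not needed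
  have hA : ch + sh * pt f p0 ≠ 0 := by
    have := hnd x t
    rw [show ((x, t) : ℝ × ℝ) = p0 from rfl] at this
    intro h
    exact this (by linarith [h])
  show (1 - pt g q ^ 2) * px (px g) q + 2 * px g q * pt g q * px (pt g) q
      - (1 + px g q ^ 2) * pt (pt g) q = 0
  have E1 := hE1 p0
  have E2 := hE2 p0
  rw [hq'] at E1 E2
  exact bi_algebra_key sh ch (pt f p0) (px f p0) (pt (pt f) p0) (px (pt f) p0)
    (px (px f) p0) (pt g q) (px g q) (pt (pt g) q) (px (pt g) q) (px (px g) q)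
    hcs hA E1 E2 E3 E4 E5 (by linear_combination hEf)
end

section
/- Let I ⊆ ℝ be an open interval and let v : ℝ → ℝ be C² on I and satisfy the reduced ordinary differential equation v'(y) + y·v''(y) − 2y·v'(y)³ = 0 for all y ∈ I. Then the function u(x,t) = v(t² − x²) is a solution of the Born-Infeld equation on the open set Ω = {(x,t) ∈ ℝ² : t² − x² ∈ I}. (This is the symmetry reduction by the boost v₄ = t∂_x + x∂_t, with similarity variable y = −x² + t².) -/
section aux

/-- The quadratic map `φ(x,t) = t² − x²`. -/
noncomputable def BIphi : ℝ × ℝ → ℝ := fun p => p.2 ^ 2 - p.1 ^ 2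

/-- The derivative of `BIphi` at `p`. -/
noncomputable def BIL (p : ℝ × ℝ) : (ℝ × ℝ) →L[ℝ] ℝ :=
  (2 * p.2) • ContinuousLinearMap.snd ℝ ℝ ℝ - (2 * p.1) • ContinuousLinearMap.fst ℝ ℝ ℝ

lemma BIphi_hasFDerivAt (p : ℝ × ℝ) : HasFDerivAt BIphi (BIL p) p := by
  have h1 : HasFDerivAt (fun q : ℝ × ℝ => q.1 ^ 2)
      (p.1 • ContinuousLinearMap.fst ℝ ℝ ℝ + p.1 • ContinuousLinearMap.fst ℝ ℝ ℝ) p := by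
    simpa [sq, Pi.mul_def] using (hasFDerivAt_fst (𝕜 := ℝ) (p := p)).mul (hasFDerivAt_fst (𝕜 := ℝ) (p := p))
  have h2 : HasFDerivAt (fun q : ℝ × ℝ => q.2 ^ 2)
      (p.2 • ContinuousLinearMap.snd ℝ ℝ ℝ + p.2 • ContinuousLinearMap.snd ℝ ℝ ℝ) p := by
    simpa [sq, Pi.mul_def] using (hasFDerivAt_snd (𝕜 := ℝ) (p := p)).mul (hasFDerivAt_snd (𝕜 := ℝ) (p := p))
  have h := h2.sub h1
  refine h.congr_fderiv ?_
  refine ContinuousLinearMap.ext fun q => ?_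
  simp [BIL]
  ring

@[simp] lemma BIL_apply (p q : ℝ × ℝ) : BIL p q = 2 * p.2 * q.2 - 2 * p.1 * q.1 := by
  simp [BIL]

end aux

/-- Symmetry reduction by the boost `v₄ = t∂ₓ + x∂_t` with similarity variable
`y = −x² + t²`: if `v` solves `v' + y v'' − 2y (v')³ = 0` on an open interval `I`,
then `u(x,t) = v(t² − x²)` solves the Born-Infeld equation on
`{(x,t) : t² − x² ∈ I}`. -/
theorem bornInfeld_reduction_boost
    (I : Set ℝ) (hIopen : IsOpen I) (hIinterval : I.OrdConnected)
    (v : ℝ → ℝ) (hv : ContDiffOn ℝ 2 v I)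
    (hode : ∀ y ∈ I, deriv v y + y * deriv (deriv v) y - 2 * y * (deriv v y) ^ 3 = 0) :
    IsBISolution (fun p : ℝ × ℝ => v (p.2 ^ 2 - p.1 ^ 2))
      {p : ℝ × ℝ | p.2 ^ 2 - p.1 ^ 2 ∈ I} := by
  set Ω : Set (ℝ × ℝ) := {p : ℝ × ℝ | p.2 ^ 2 - p.1 ^ 2 ∈ I} with hΩ
  have hφcd : ContDiff ℝ 2 BIphi := by
    exact (contDiff_snd.pow 2).sub (contDiff_fst.pow 2)
  have hΩopen : IsOpen Ω := hIopen.preimage hφcd.continuous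
  have hmaps : Set.MapsTo BIphi Ω I := fun p hp => hp
  set u : ℝ × ℝ → ℝ := fun p : ℝ × ℝ => v (p.2 ^ 2 - p.1 ^ 2) with hu
  -- first derivatives of v
  have hv' : ContDiffOn ℝ 1 (deriv v) I :=
    hv.deriv_of_isOpen hIopen (by norm_num)
  have hdv : ∀ y ∈ I, HasDerivAt v (deriv v y) y := fun y hy =>
    ((hv.differentiableOn (by norm_num)).differentiableAt
      (hIopen.mem_nhds hy)).hasDerivAt
  have hdv' : ∀ y ∈ I, HasDerivAt (deriv v) (deriv (deriv v) y) y := fun y hy =>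
    ((hv'.differentiableOn one_ne_zero).differentiableAt
      (hIopen.mem_nhds hy)).hasDerivAt
  -- u = v ∘ BIphi and its fderiv
  have huφ : u = v ∘ BIphi := rfl
  have hDu : ∀ p ∈ Ω, HasFDerivAt u ((deriv v (BIphi p)) • BIL p) p := fun p hp =>
    (hdv _ hp).comp_hasFDerivAt p (BIphi_hasFDerivAt p)
  have hpx : ∀ p ∈ Ω, px u p = deriv v (BIphi p) * (-2 * p.1) := by
    intro p hp
    rw [px, (hDu p hp).fderiv]
    first
    | (simp; ring)
    | simp
  have hpt : ∀ p ∈ Ω, pt u p = deriv v (BIphi p) * (2 * p.2) := by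
    intro p hp
    rw [pt, (hDu p hp).fderiv]
    simp
  -- second-order computations at a point p ∈ Ω
  refine ⟨⟨Ω, hΩopen, le_rfl, hv.comp hφcd.contDiffOn hmaps⟩, ?_⟩
  intro p hp
  set y := BIphi p with hy
  have hyI : y ∈ I := hp
  set a := deriv v y with ha
  set b := deriv (deriv v) y with hb
  -- fderiv of the first partials
  have hDg : HasFDerivAt (fun q => deriv v (BIphi q))
      (b • BIL p) p := by
    have := (hdv' _ hyI).comp_hasFDerivAt p (BIphi_hasFDerivAt p); exact this
  have hDx1 : HasFDerivAt (fun q : ℝ × ℝ => (-2 : ℝ) * q.1)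
      ((-2 : ℝ) • ContinuousLinearMap.fst ℝ ℝ ℝ) p :=
    (hasFDerivAt_fst (𝕜 := ℝ) (p := p)).const_smul (-2 : ℝ)
  have hDt1 : HasFDerivAt (fun q : ℝ × ℝ => (2 : ℝ) * q.2)
      ((2 : ℝ) • ContinuousLinearMap.snd ℝ ℝ ℝ) p :=
    (hasFDerivAt_snd (𝕜 := ℝ) (p := p)).const_smul (2 : ℝ)
  have hDg1 : HasFDerivAt (fun q => deriv v (BIphi q) * (-2 * q.1))
      (a • ((-2 : ℝ) • ContinuousLinearMap.fst ℝ ℝ ℝ) + (-2 * p.1) • (b • BIL p)) p :=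
    hDg.mul hDx1
  have hDg2 : HasFDerivAt (fun q => deriv v (BIphi q) * (2 * q.2))
      (a • ((2 : ℝ) • ContinuousLinearMap.snd ℝ ℝ ℝ) + (2 * p.2) • (b • BIL p)) p :=
    hDg.mul hDt1
  -- px u agrees with g1 near p, pt u with g2 near p
  have hev1 : px u =ᶠ[nhds p] (fun q => deriv v (BIphi q) * (-2 * q.1)) :=
    Filter.eventuallyEq_of_mem (hΩopen.mem_nhds hp) hpx
  have hev2 : pt u =ᶠ[nhds p] (fun q => deriv v (BIphi q) * (2 * q.2)) :=
    Filter.eventuallyEq_of_mem (hΩopen.mem_nhds hp) hpt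
  have hpxx : px (px u) p = 4 * p.1 ^ 2 * b - 2 * a := by
    rw [px, hev1.fderiv_eq, hDg1.fderiv]
    simp; ring
  have hptt : pt (pt u) p = 4 * p.2 ^ 2 * b + 2 * a := by
    rw [pt, hev2.fderiv_eq, hDg2.fderiv]
    simp; ring
  have hpxt : px (pt u) p = -4 * p.1 * p.2 * b := by
    rw [px, hev2.fderiv_eq, hDg2.fderiv]
    simp; ring
  have hx := hpx p hp
  have ht := hpt p hp
  rw [← hy, ← ha] at hx ht
  have hode' : a + y * b - 2 * y * a ^ 3 = 0 := hode y hyI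
  have hy' : y = p.2 ^ 2 - p.1 ^ 2 := rfl
  rw [hx, ht, hpxx, hptt, hpxt]
  rw [hy'] at hode'
  linear_combination (-4 : ℝ) * hode'
end

section
/- Let I ⊆ ℝ be an open interval and let v : ℝ → ℝ be C² on I and satisfy v'(t)² − v(t)·v''(t) − 2·v(t) = 0 for all t ∈ I. Then the function u(x,t) = √(v(t) − x²) is a solution of the Born-Infeld equation on the open set Ω = {(x,t) ∈ ℝ² : t ∈ I and x² < v(t)}. (This is the symmetry reduction by v₅ = −u∂_x + x∂_u, with invariant x² + u² = v(t).) -/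
/-- Symmetry reduction by `v₅ = −u∂ₓ + x∂_u` with invariant `x² + u² = v(t)`:
if `v` solves `(v')² − v v'' − 2v = 0` on an open interval `I`, then
`u(x,t) = √(v(t) − x²)` solves the Born-Infeld equation on
`{(x,t) : t ∈ I ∧ x² < v(t)}`. -/
theorem bornInfeld_reduction_rotation
    (I : Set ℝ) (hIopen : IsOpen I) (hIinterval : I.OrdConnected)
    (v : ℝ → ℝ) (hv : ContDiffOn ℝ 2 v I)
    (hode : ∀ t ∈ I, (deriv v t) ^ 2 - v t * deriv (deriv v) t - 2 * v t = 0) :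
    IsBISolution (fun p : ℝ × ℝ => Real.sqrt (v p.2 - p.1 ^ 2))
      {p : ℝ × ℝ | p.2 ∈ I ∧ p.1 ^ 2 < v p.2} := by
  set u : ℝ × ℝ → ℝ := fun p : ℝ × ℝ => Real.sqrt (v p.2 - p.1 ^ 2) with hu
  set Ω : Set (ℝ × ℝ) := {p : ℝ × ℝ | p.2 ∈ I ∧ p.1 ^ 2 < v p.2} with hΩ
  -- basic facts
  have hw : ∀ q ∈ Ω, 0 < v q.2 - q.1 ^ 2 := fun q hq => by
    have := hq.2; simpa using sub_pos.mpr this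
  have hvd : ∀ t ∈ I, HasDerivAt v (deriv v t) t := fun t ht =>
    ((hv.contDiffAt (hIopen.mem_nhds ht)).differentiableAt (by norm_num)).hasDerivAt
  have hv1 : ContDiffOn ℝ 1 (deriv v) I := hv.deriv_of_isOpen hIopen (by norm_num)
  have hvd2 : ∀ t ∈ I, HasDerivAt (deriv v) (deriv (deriv v) t) t := fun t ht =>
    ((hv1.contDiffAt (hIopen.mem_nhds ht)).differentiableAt (by norm_num)).hasDerivAt
  -- Ω is open
  have hfc : ContinuousOn (fun q : ℝ × ℝ => v q.2 - q.1 ^ 2) {q : ℝ × ℝ | q.2 ∈ I} := by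
    apply ContinuousOn.sub
    · exact hv.continuousOn.comp continuous_snd.continuousOn (fun q hq => hq)
    · exact (continuous_fst.pow 2).continuousOn
  have hSopen : IsOpen {q : ℝ × ℝ | q.2 ∈ I} := hIopen.preimage continuous_snd
  have hΩopen : IsOpen Ω := by
    have := hfc.isOpen_inter_preimage hSopen (isOpen_Ioi (a := (0:ℝ)))
    convert this using 1
    ext q
    simp [hΩ, and_comm, sub_pos]
  -- the master derivative of u
  set L : ℝ × ℝ → (ℝ × ℝ →L[ℝ] ℝ) := fun q =>
    (1 / (2 * Real.sqrt (v q.2 - q.1 ^ 2))) •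
      ((deriv v q.2) • ContinuousLinearMap.snd ℝ ℝ ℝ - (2 * q.1) • ContinuousLinearMap.fst ℝ ℝ ℝ)
    with hL
  have hU : ∀ q ∈ Ω, HasFDerivAt u (L q) q := by
    intro q hq
    have h1 : HasFDerivAt (fun q : ℝ × ℝ => v q.2) ((deriv v q.2) • ContinuousLinearMap.snd ℝ ℝ ℝ) q :=
      (hvd q.2 hq.1).comp_hasFDerivAt q (hasFDerivAt_snd)
    have h2 : HasFDerivAt (fun q : ℝ × ℝ => q.1 ^ 2) ((2 * q.1) • ContinuousLinearMap.fst ℝ ℝ ℝ) q := by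
      have hfst : HasFDerivAt (fun q : ℝ × ℝ => q.1) (ContinuousLinearMap.fst ℝ ℝ ℝ) q :=
        hasFDerivAt_fst
      have := (hasDerivAt_pow 2 q.1).comp_hasFDerivAt q hfst
      simpa [Function.comp_def] using this
    exact (h1.sub h2).sqrt (ne_of_gt (hw q hq))
  have happly : ∀ (q : ℝ × ℝ) (a b : ℝ), L q (a, b) =
      (1 / (2 * Real.sqrt (v q.2 - q.1 ^ 2))) * (deriv v q.2 * b - 2 * q.1 * a) := by
    intro q a b
    simp [hL]
  have hpx1 : ∀ q ∈ Ω, px u q = -q.1 * (Real.sqrt (v q.2 - q.1 ^ 2))⁻¹ := by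
    intro q hq
    have hs : Real.sqrt (v q.2 - q.1 ^ 2) ≠ 0 := (Real.sqrt_pos.mpr (hw q hq)).ne'
    rw [px, (hU q hq).fderiv, happly]
    field_simp
    ring
  have hpt1 : ∀ q ∈ Ω, pt u q = deriv v q.2 * (2 * Real.sqrt (v q.2 - q.1 ^ 2))⁻¹ := by
    intro q hq
    have hs : Real.sqrt (v q.2 - q.1 ^ 2) ≠ 0 := (Real.sqrt_pos.mpr (hw q hq)).ne'
    rw [pt, (hU q hq).fderiv, happly]
    field_simp
    ring
  have hC2 : ContDiffOn ℝ 2 u Ω := by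
    intro q hq
    have hf : ContDiffAt ℝ 2 (fun q : ℝ × ℝ => v q.2 - q.1 ^ 2) q := by
      have h1 : ContDiffAt ℝ 2 (fun q : ℝ × ℝ => v q.2) q :=
        (hv.contDiffAt (hIopen.mem_nhds hq.1)).comp q contDiff_snd.contDiffAt
      exact h1.sub ((contDiff_fst.pow 2).contDiffAt)
    exact ((Real.contDiffAt_sqrt (ne_of_gt (hw q hq))).comp q hf).contDiffWithinAt
  refine ⟨⟨Ω, hΩopen, subset_rfl, hC2⟩, ?_⟩
  intro p hp
  have hpI : p.2 ∈ I := hp.1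
  have hw0 : 0 < v p.2 - p.1 ^ 2 := hw p hp
  have hs0 : 0 < Real.sqrt (v p.2 - p.1 ^ 2) := Real.sqrt_pos.mpr hw0
  have hmem : Ω ∈ nhds p := hΩopen.mem_nhds hp
  have hinv := (hasDerivAt_inv hs0.ne').comp_hasFDerivAt p (hU p hp)
  have hfstp : HasFDerivAt (fun q : ℝ × ℝ => q.1) (ContinuousLinearMap.fst ℝ ℝ ℝ) p :=
    hasFDerivAt_fst
  have hG1 := hfstp.fun_neg.fun_mul hinv
  have e_xx : px (px u) p =
      -(p.1 ^ 2) * (Real.sqrt (v p.2 - p.1 ^ 2) ^ 3)⁻¹ - (Real.sqrt (v p.2 - p.1 ^ 2))⁻¹ := by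
    have hev : px u =ᶠ[nhds p] fun q => -q.1 * ((fun y : ℝ => y⁻¹) ∘ u) q := by
      filter_upwards [hmem] with q hq
      simpa [hu, Function.comp_def] using hpx1 q hq
    rw [px, hev.fderiv_eq, hG1.fderiv]
    simp only [hu, Function.comp_def, ContinuousLinearMap.add_apply, ContinuousLinearMap.coe_smul',
      ContinuousLinearMap.neg_apply, Pi.smul_apply, smul_eq_mul, ContinuousLinearMap.coe_fst',
      ContinuousLinearMap.coe_snd', happly]
    have hs0' := hs0
    generalize hg : Real.sqrt (v p.2 - p.1 ^ 2) = S at hs0' ⊢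
    field_simp
    ring
  have h2u : HasFDerivAt (fun q : ℝ × ℝ => 2 * u q) ((2 : ℝ) • L p) p :=
    (hU p hp).const_mul 2
  have hs0' : (2 : ℝ) * u p ≠ 0 := by
    have : u p = Real.sqrt (v p.2 - p.1 ^ 2) := by rw [hu]
    rw [this]; positivity
  have hden := (hasDerivAt_inv hs0').comp_hasFDerivAt p h2u
  have hnum : HasFDerivAt (fun q : ℝ × ℝ => deriv v q.2)
      ((deriv (deriv v) p.2) • ContinuousLinearMap.snd ℝ ℝ ℝ) p :=
    (hvd2 p.2 hpI).comp_hasFDerivAt p hasFDerivAt_snd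
  have hG2 := hnum.fun_mul hden
  have hev2 : pt u =ᶠ[nhds p] fun q => deriv v q.2 * ((fun y : ℝ => y⁻¹) ∘ fun q : ℝ × ℝ => 2 * u q) q := by
    filter_upwards [hmem] with q hq
    simpa [hu, Function.comp_def] using hpt1 q hq
  have e_xt : px (pt u) p =
      deriv v p.2 * p.1 * (2 * Real.sqrt (v p.2 - p.1 ^ 2) ^ 3)⁻¹ := by
    rw [px, hev2.fderiv_eq, hG2.fderiv]
    simp only [hu, Function.comp_def, ContinuousLinearMap.add_apply, ContinuousLinearMap.coe_smul',
      ContinuousLinearMap.neg_apply, Pi.smul_apply, smul_eq_mul, ContinuousLinearMap.coe_fst',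
      ContinuousLinearMap.coe_snd', happly]
    have hs0' := hs0
    generalize hg : Real.sqrt (v p.2 - p.1 ^ 2) = S at hs0' ⊢
    field_simp
    ring
  have e_tt : pt (pt u) p =
      deriv (deriv v) p.2 * (2 * Real.sqrt (v p.2 - p.1 ^ 2))⁻¹
        - (deriv v p.2) ^ 2 * (4 * Real.sqrt (v p.2 - p.1 ^ 2) ^ 3)⁻¹ := by
    rw [pt, hev2.fderiv_eq, hG2.fderiv]
    simp only [hu, Function.comp_def, ContinuousLinearMap.add_apply, ContinuousLinearMap.coe_smul',
      ContinuousLinearMap.neg_apply, Pi.smul_apply, smul_eq_mul, ContinuousLinearMap.coe_fst',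
      ContinuousLinearMap.coe_snd', happly]
    have hs0' := hs0
    generalize hg : Real.sqrt (v p.2 - p.1 ^ 2) = S at hs0' ⊢
    field_simp
    ring
  rw [e_xx, e_xt, e_tt, hpx1 p hp, hpt1 p hp]
  set S := Real.sqrt (v p.2 - p.1 ^ 2) with hS
  have hS2 : S ^ 2 = v p.2 - p.1 ^ 2 := Real.sq_sqrt hw0.le
  have hV : v p.2 = S ^ 2 + p.1 ^ 2 := by linarith
  have key : (deriv v p.2) ^ 2 - (S ^ 2 + p.1 ^ 2) * deriv (deriv v) p.2
      - 2 * (S ^ 2 + p.1 ^ 2) = 0 := by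
    have h0 := hode p.2 hpI
    rw [hV] at h0
    linarith
  have hS0 : (0 : ℝ) < S := hs0
  field_simp
  linear_combination (8 * S ^ 2) * key
end

section
/- Let I ⊆ ℝ be an open interval and let v : ℝ → ℝ be C² on I and satisfy v(x)·v''(x) − v'(x)² − 2·v(x) = 0 for all x ∈ I. Then the function u(x,t) = √(v(x) + t²) is a solution of the Born-Infeld equation on the open set Ω = {(x,t) ∈ ℝ² : x ∈ I and v(x) + t² > 0}. (This is the symmetry reduction by v₆ = u∂_t + t∂_u, with invariant −t² + u² = v(x).) -/
open ContinuousLinearMap in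
set_option maxHeartbeats 1000000 in
/-- Symmetry reduction by `v₆ = u∂_t + t∂_u` with invariant `−t² + u² = v(x)`:
if `v` solves `v v'' − (v')² − 2v = 0` on an open interval `I`, then
`u(x,t) = √(v(x) + t²)` solves the Born-Infeld equation on
`{(x,t) : x ∈ I ∧ v(x) + t² > 0}`. -/
theorem bornInfeld_reduction_hyperbolic
    (I : Set ℝ) (hIopen : IsOpen I) (hIinterval : I.OrdConnected)
    (v : ℝ → ℝ) (hv : ContDiffOn ℝ 2 v I)
    (hode : ∀ x ∈ I, v x * deriv (deriv v) x - (deriv v x) ^ 2 - 2 * v x = 0) :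
    IsBISolution (fun p : ℝ × ℝ => Real.sqrt (v p.1 + p.2 ^ 2))
      {p : ℝ × ℝ | p.1 ∈ I ∧ v p.1 + p.2 ^ 2 > 0} := by
  set u : ℝ × ℝ → ℝ := fun p => Real.sqrt (v p.1 + p.2 ^ 2) with hu_def
  set Ω : Set (ℝ × ℝ) := {p : ℝ × ℝ | p.1 ∈ I ∧ v p.1 + p.2 ^ 2 > 0} with hΩ_def
  set S : Set (ℝ × ℝ) := Prod.fst ⁻¹' I with hS_def
  have hSopen : IsOpen S := hIopen.preimage continuous_fst
  have hwS : ContDiffOn ℝ 2 (fun p : ℝ × ℝ => v p.1 + p.2 ^ 2) S :=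
    (hv.comp contDiff_fst.contDiffOn (fun p hp => hp)).add
      ((contDiff_snd.pow 2).contDiffOn)
  have hΩeq : Ω = S ∩ (fun p : ℝ × ℝ => v p.1 + p.2 ^ 2) ⁻¹' (Set.Ioi 0) := by
    ext p; simp [hΩ_def, hS_def, Set.mem_setOf_eq, and_comm]
  have hΩopen : IsOpen Ω := by
    rw [hΩeq]
    exact hwS.continuousOn.isOpen_inter_preimage hSopen isOpen_Ioi
  have hΩS : Ω ⊆ S := fun p hp => hp.1
  -- basic differentiability facts
  have hv1 : ContDiffOn ℝ 1 (deriv v) I := hv.deriv_of_isOpen hIopen (by norm_num)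
  have hvd : ∀ y ∈ I, HasDerivAt v (deriv v y) y := fun y hy =>
    ((hv.differentiableOn (by norm_num)).differentiableAt (hIopen.mem_nhds hy)).hasDerivAt
  have hvdd : ∀ y ∈ I, HasDerivAt (deriv v) (deriv (deriv v) y) y := fun y hy =>
    ((hv1.differentiableOn (by norm_num)).differentiableAt (hIopen.mem_nhds hy)).hasDerivAt
  have hUd : ∀ q : ℝ × ℝ, q ∈ Ω → HasFDerivAt u
      ((1 / (2 * u q)) •
        ((deriv v q.1) • fst ℝ ℝ ℝ + (2 * q.2) • snd ℝ ℝ ℝ)) q := by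
    intro q hq
    have h1 : HasFDerivAt (fun p : ℝ × ℝ => v p.1) ((deriv v q.1) • fst ℝ ℝ ℝ) q :=
      HasDerivAt.comp_hasFDerivAt q (hvd q.1 hq.1) (hasFDerivAt_fst)
    have h2 : HasFDerivAt (fun p : ℝ × ℝ => p.2 ^ 2) ((2 * q.2) • snd ℝ ℝ ℝ) q := by
      have := HasDerivAt.comp_hasFDerivAt q (hasDerivAt_pow 2 q.2)
        (hasFDerivAt_snd (𝕜 := ℝ) (E := ℝ) (F := ℝ))
      simpa [Function.comp_def] using this
    have hpos : 0 < v q.1 + q.2 ^ 2 := hq.2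
    exact HasDerivAt.comp_hasFDerivAt q (Real.hasDerivAt_sqrt (ne_of_gt hpos)) (h1.add h2)
  have hux : ∀ q ∈ Ω, px u q = deriv v q.1 * (2 * u q)⁻¹ := by
    intro q hq
    rw [px, (hUd q hq).fderiv]
    simp [div_eq_mul_inv]
    ring
  have hut : ∀ q ∈ Ω, pt u q = q.2 * (u q)⁻¹ := by
    intro q hq
    have hpos : 0 < v q.1 + q.2 ^ 2 := hq.2
    have hune : u q ≠ 0 := ne_of_gt (Real.sqrt_pos.2 hpos)
    rw [pt, (hUd q hq).fderiv]
    simp [div_eq_mul_inv]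
    field_simp
  constructor
  · exact ⟨Ω, hΩopen, le_refl _, (hwS.mono hΩS).sqrt (fun p hp => ne_of_gt hp.2)⟩
  intro p hp
  obtain ⟨hpI, hppos⟩ := hp
  have hs : 0 < Real.sqrt (v p.1 + p.2 ^ 2) := Real.sqrt_pos.2 hppos
  set s : ℝ := Real.sqrt (v p.1 + p.2 ^ 2) with hs_def
  have hs2 : s ^ 2 = v p.1 + p.2 ^ 2 := Real.sq_sqrt hppos.le
  set vd : ℝ := deriv v p.1 with hvd_def
  set vdd : ℝ := deriv (deriv v) p.1 with hvdd_def
  have hup : u p = s := rfl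
  have hsne : s ≠ 0 := ne_of_gt hs
  set L : ℝ × ℝ →L[ℝ] ℝ := (1 / (2 * s)) • (vd • fst ℝ ℝ ℝ + (2 * p.2) • snd ℝ ℝ ℝ) with hL_def
  have hLu : HasFDerivAt u L p := by
    have := hUd p ⟨hpI, hppos⟩
    rwa [hup] at this
  -- second derivatives
  have hfd : HasFDerivAt (fun q : ℝ × ℝ => deriv v q.1) (vdd • fst ℝ ℝ ℝ) p :=
    HasDerivAt.comp_hasFDerivAt p (hvdd p.1 hpI) (hasFDerivAt_fst)
  have h2u : HasFDerivAt (fun q : ℝ × ℝ => 2 * u q) ((2 : ℝ) • L) p := hLu.const_mul 2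
  have h2une : (2 : ℝ) * u p ≠ 0 := by rw [hup]; positivity
  have hinv2u : HasFDerivAt (fun q : ℝ × ℝ => (2 * u q)⁻¹)
      ((-(((2 * s) ^ 2)⁻¹)) • ((2 : ℝ) • L)) p := by
    have := HasDerivAt.comp_hasFDerivAt p (hasDerivAt_inv h2une) h2u
    rwa [hup] at this
  have hU1 : HasFDerivAt (fun q : ℝ × ℝ => deriv v q.1 * (2 * u q)⁻¹)
      ((deriv v p.1) • ((-(((2 * s) ^ 2)⁻¹)) • ((2 : ℝ) • L))
        + (2 * u p)⁻¹ • (vdd • fst ℝ ℝ ℝ)) p := hfd.mul hinv2u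
  have hinvu : HasFDerivAt (fun q : ℝ × ℝ => (u q)⁻¹) ((-((s ^ 2)⁻¹)) • L) p := by
    have := HasDerivAt.comp_hasFDerivAt p (hasDerivAt_inv (by rw [hup]; positivity)) hLu
    rwa [hup] at this
  have hU2 : HasFDerivAt (fun q : ℝ × ℝ => q.2 * (u q)⁻¹)
      ((p.2 : ℝ) • ((-((s ^ 2)⁻¹)) • L) + (u p)⁻¹ • (snd ℝ ℝ ℝ)) p :=
    (hasFDerivAt_snd (𝕜 := ℝ) (E := ℝ) (F := ℝ)).mul hinvu
  -- identify px u and pt u with closed forms near p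
  have hmem : Ω ∈ nhds p := hΩopen.mem_nhds ⟨hpI, hppos⟩
  have hE1 : px u =ᶠ[nhds p] fun q => deriv v q.1 * (2 * u q)⁻¹ :=
    Filter.eventuallyEq_of_mem hmem (fun q hq => hux q hq)
  have hE2 : pt u =ᶠ[nhds p] fun q => q.2 * (u q)⁻¹ :=
    Filter.eventuallyEq_of_mem hmem (fun q hq => hut q hq)
  have hxx : px (px u) p = vdd / (2 * s) - vd ^ 2 / (4 * s ^ 3) := by
    rw [px, hE1.fderiv_eq, hU1.fderiv]
    simp only [hL_def, hup, ContinuousLinearMap.add_apply, ContinuousLinearMap.smul_apply,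
      ContinuousLinearMap.coe_fst', ContinuousLinearMap.coe_snd', smul_eq_mul]
    field_simp
    ring
  have hxt : px (pt u) p = -(p.2 * vd) / (2 * s ^ 3) := by
    rw [px, hE2.fderiv_eq, hU2.fderiv]
    simp only [hL_def, hup, ContinuousLinearMap.add_apply, ContinuousLinearMap.smul_apply,
      ContinuousLinearMap.coe_fst', ContinuousLinearMap.coe_snd', smul_eq_mul]
    rw [eq_div_iff (by positivity : (2:ℝ) * s ^ 3 ≠ 0)]
    field_simp
    ring
  have htt : pt (pt u) p = 1 / s - p.2 ^ 2 / s ^ 3 := by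
    rw [pt, hE2.fderiv_eq, hU2.fderiv]
    simp only [hL_def, hup, ContinuousLinearMap.add_apply, ContinuousLinearMap.smul_apply,
      ContinuousLinearMap.coe_fst', ContinuousLinearMap.coe_snd', smul_eq_mul]
    field_simp
    ring
  have hpx_p : px u p = vd / (2 * s) := by
    rw [hux p ⟨hpI, hppos⟩, hup]; field_simp; rfl
  have hpt_p : pt u p = p.2 / s := by
    rw [hut p ⟨hpI, hppos⟩, hup]; field_simp
  rw [hxx, hxt, htt, hpx_p, hpt_p]
  have ode : v p.1 * vdd - vd ^ 2 - 2 * v p.1 = 0 := hode p.1 hpI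
  have hvx : v p.1 = s ^ 2 - p.2 ^ 2 := by linarith [hs2]
  rw [hvx] at ode
  have expand : (1 - (p.2 / s) ^ 2) * (vdd / (2 * s) - vd ^ 2 / (4 * s ^ 3)) +
        2 * (vd / (2 * s)) * (p.2 / s) * (-(p.2 * vd) / (2 * s ^ 3)) -
      (1 + (vd / (2 * s)) ^ 2) * (1 / s - p.2 ^ 2 / s ^ 3)
      = ((s ^ 2 - p.2 ^ 2) * vdd - vd ^ 2 - 2 * (s ^ 2 - p.2 ^ 2)) / (2 * s ^ 3) := by
    field_simp
    ring
  rw [expand, ode, zero_div]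
end

section
/- Let c₁ ≠ 0 and c₂ be real constants, and define R(x,t) = 2c₁·e^{(t+c₂)/c₁} + 8c₁³·e^{−(t+c₂)/c₁} − 4x² − 8c₁². Then the function u(x,t) = (1/2)·√(R(x,t)) is a solution of the Born-Infeld equation on the open set Ω = {(x,t) ∈ ℝ² : R(x,t) > 0}. (This is the group-invariant solution associated to the rotation symmetry v₅ = −u∂_x + x∂_u.) -/
noncomputable section D
variable (c₁ c₂ : ℝ)
noncomputable def Rf (p : ℝ × ℝ) : ℝ :=
  2 * c₁ * Real.exp ((p.2 + c₂) / c₁) + 8 * c₁ ^ 3 * Real.exp (-((p.2 + c₂) / c₁))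
    - 4 * p.1 ^ 2 - 8 * c₁ ^ 2

lemma contDiff_Rf (hc₁ : c₁ ≠ 0) : ContDiff ℝ 2 (Rf c₁ c₂) := by
  unfold Rf
  have : c₁ ≠ 0 := hc₁
  fun_prop (disch := intros; assumption)

lemma isOpen_Omega (hc₁ : c₁ ≠ 0) : IsOpen {p : ℝ × ℝ | 0 < Rf c₁ c₂ p} :=
  isOpen_lt continuous_const (contDiff_Rf c₁ c₂ hc₁).continuous

lemma contDiffOn_u (hc₁ : c₁ ≠ 0) : ContDiffOn ℝ 2 (fun p => (1/2 : ℝ) * Real.sqrt (Rf c₁ c₂ p))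
    {p : ℝ × ℝ | 0 < Rf c₁ c₂ p} := by
  refine ContDiffOn.mul contDiffOn_const ?_
  exact ContDiffOn.sqrt ((contDiff_Rf c₁ c₂ hc₁).contDiffOn) (fun p hp => ne_of_gt hp)
end D


open Real

noncomputable section BIaux

def lin (a b : ℝ) : ℝ × ℝ →L[ℝ] ℝ :=
  a • ContinuousLinearMap.fst ℝ ℝ ℝ + b • ContinuousLinearMap.snd ℝ ℝ ℝ

@[simp] lemma lin_apply (a b : ℝ) (v : ℝ × ℝ) : lin a b v = a * v.1 + b * v.2 := by
  simp [lin, smul_eq_mul]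

lemma hasFDerivAt_theta (c₁ c₂ : ℝ) (p : ℝ × ℝ) :
    HasFDerivAt (fun q : ℝ × ℝ => (q.2 + c₂) / c₁) (lin 0 c₁⁻¹) p := by
  have h := ((hasFDerivAt_snd (𝕜 := ℝ) (E := ℝ) (F := ℝ) (p := p)).add_const c₂).mul_const c₁⁻¹
  have h2 : HasFDerivAt (fun q : ℝ × ℝ => (q.2 + c₂) / c₁)
      (c₁⁻¹ • ((ContinuousLinearMap.snd ℝ ℝ ℝ))) p := by
    simpa [div_eq_mul_inv] using h
  convert h2 using 1
  refine ContinuousLinearMap.ext fun v => ?_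
  simp [lin, smul_eq_mul]

lemma hasFDerivAt_Rf (c₁ c₂ : ℝ) (p : ℝ × ℝ) :
    HasFDerivAt (Rf c₁ c₂)
      (lin (-8 * p.1)
        (2 * c₁ * Real.exp ((p.2 + c₂) / c₁) * c₁⁻¹
          - 8 * c₁ ^ 3 * Real.exp (-((p.2 + c₂) / c₁)) * c₁⁻¹)) p := by
  have hθ := hasFDerivAt_theta c₁ c₂ p
  have h1 := hθ.exp.const_mul (2 * c₁)
  have h2 := hθ.neg.exp.const_mul (8 * c₁ ^ 3)
  have hx : HasFDerivAt (fun q : ℝ × ℝ => q.1 ^ 2)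
      (((2 : ℕ) * p.1 ^ 1 : ℝ) • (ContinuousLinearMap.fst ℝ ℝ ℝ)) p :=
    (hasDerivAt_pow 2 p.1).comp_hasFDerivAt p (hasFDerivAt_fst)
  have h3 := hx.const_mul (4 : ℝ)
  have h := ((h1.add h2).sub h3).sub_const (8 * c₁ ^ 2)
  refine h.congr_fderiv ?_
  refine ContinuousLinearMap.ext fun v => ?_
  simp [lin, smul_eq_mul]
  ring

def uf (c₁ c₂ : ℝ) (p : ℝ × ℝ) : ℝ := (1 / 2) * Real.sqrt (Rf c₁ c₂ p)
def Ux (c₁ c₂ : ℝ) (p : ℝ × ℝ) : ℝ := -2 * p.1 * (Real.sqrt (Rf c₁ c₂ p))⁻¹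
def Ut (c₁ c₂ : ℝ) (p : ℝ × ℝ) : ℝ :=
  (2⁻¹ * Real.exp ((p.2 + c₂) / c₁) - 2 * c₁ ^ 2 * Real.exp (-((p.2 + c₂) / c₁)))
    * (Real.sqrt (Rf c₁ c₂ p))⁻¹

lemma sqrt_ne (c₁ c₂ : ℝ) {p : ℝ × ℝ} (hp : 0 < Rf c₁ c₂ p) :
    Real.sqrt (Rf c₁ c₂ p) ≠ 0 := (Real.sqrt_pos.2 hp).ne'

lemma px_uf (c₁ c₂ : ℝ) (hc₁ : c₁ ≠ 0) {p : ℝ × ℝ} (hp : 0 < Rf c₁ c₂ p) :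
    px (uf c₁ c₂) p = Ux c₁ c₂ p := by
  have h := (((hasFDerivAt_Rf c₁ c₂ p).sqrt hp.ne').const_mul (1 / 2 : ℝ)).fderiv
  have hs := sqrt_ne c₁ c₂ hp
  rw [px]
  rw [show (fun y => 1 / 2 * Real.sqrt (Rf c₁ c₂ y)) = uf c₁ c₂ from rfl] at h
  rw [h]
  simp [Ux, smul_eq_mul]
  field_simp
  ring

lemma pt_uf (c₁ c₂ : ℝ) (hc₁ : c₁ ≠ 0) {p : ℝ × ℝ} (hp : 0 < Rf c₁ c₂ p) :
    pt (uf c₁ c₂) p = Ut c₁ c₂ p := by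
  have h := (((hasFDerivAt_Rf c₁ c₂ p).sqrt hp.ne').const_mul (1 / 2 : ℝ)).fderiv
  have hs := sqrt_ne c₁ c₂ hp
  rw [pt]
  rw [show (fun y => 1 / 2 * Real.sqrt (Rf c₁ c₂ y)) = uf c₁ c₂ from rfl] at h
  rw [h]
  simp [Ut, smul_eq_mul]
  field_simp
  ring

end BIaux

noncomputable section BI2
open ContinuousLinearMap

lemma hasFDerivAt_sqrtRf (c₁ c₂ : ℝ) {p : ℝ × ℝ} (hp : 0 < Rf c₁ c₂ p) :
    HasFDerivAt (fun q => Real.sqrt (Rf c₁ c₂ q))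
      ((1 / (2 * Real.sqrt (Rf c₁ c₂ p))) • lin (-8 * p.1)
        (2 * c₁ * Real.exp ((p.2 + c₂) / c₁) * c₁⁻¹
          - 8 * c₁ ^ 3 * Real.exp (-((p.2 + c₂) / c₁)) * c₁⁻¹)) p :=
  (hasFDerivAt_Rf c₁ c₂ p).sqrt hp.ne'

lemma hasFDerivAt_invsqrt (c₁ c₂ : ℝ) {p : ℝ × ℝ} (hp : 0 < Rf c₁ c₂ p) :
    HasFDerivAt (fun q => (Real.sqrt (Rf c₁ c₂ q))⁻¹)
      ((-((Real.sqrt (Rf c₁ c₂ p)) ^ 2)⁻¹) •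
        ((1 / (2 * Real.sqrt (Rf c₁ c₂ p))) • lin (-8 * p.1)
        (2 * c₁ * Real.exp ((p.2 + c₂) / c₁) * c₁⁻¹
          - 8 * c₁ ^ 3 * Real.exp (-((p.2 + c₂) / c₁)) * c₁⁻¹))) p :=
  (hasDerivAt_inv (sqrt_ne c₁ c₂ hp)).comp_hasFDerivAt p (hasFDerivAt_sqrtRf c₁ c₂ hp)

lemma px_Ux (c₁ c₂ : ℝ) (hc₁ : c₁ ≠ 0) {p : ℝ × ℝ} (hp : 0 < Rf c₁ c₂ p) :
    fderiv ℝ (Ux c₁ c₂) p (1, 0)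
      = (-8 * p.1 ^ 2 - 2 * Rf c₁ c₂ p) * ((Real.sqrt (Rf c₁ c₂ p))⁻¹) ^ 3 := by
  have h : HasFDerivAt (Ux c₁ c₂) _ p :=
    (hasFDerivAt_fst.const_mul (-2 : ℝ)).mul (hasFDerivAt_invsqrt c₁ c₂ hp)
  rw [h.fderiv]
  have hs := sqrt_ne c₁ c₂ hp
  have hs2 : Real.sqrt (Rf c₁ c₂ p) * Real.sqrt (Rf c₁ c₂ p) = Rf c₁ c₂ p :=
    Real.mul_self_sqrt hp.le
  simp [smul_eq_mul]
  field_simp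
  linear_combination (-2 : ℝ) * hs2

end BI2

noncomputable section BI3

lemma hasFDerivAt_N (c₁ c₂ : ℝ) (p : ℝ × ℝ) :
    HasFDerivAt (fun q : ℝ × ℝ =>
        2⁻¹ * Real.exp ((q.2 + c₂) / c₁) - 2 * c₁ ^ 2 * Real.exp (-((q.2 + c₂) / c₁)))
      ((2⁻¹ : ℝ) • (Real.exp ((p.2 + c₂) / c₁) • lin 0 c₁⁻¹)
        - (2 * c₁ ^ 2 : ℝ) • (Real.exp (-((p.2 + c₂) / c₁)) • -(lin 0 c₁⁻¹))) p :=
  (((hasFDerivAt_theta c₁ c₂ p).exp.const_mul 2⁻¹).sub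
    ((hasFDerivAt_theta c₁ c₂ p).neg.exp.const_mul (2 * c₁ ^ 2)))

lemma px_Ut (c₁ c₂ : ℝ) (hc₁ : c₁ ≠ 0) {p : ℝ × ℝ} (hp : 0 < Rf c₁ c₂ p) :
    fderiv ℝ (Ut c₁ c₂) p (1, 0)
      = 4 * p.1 * (2⁻¹ * Real.exp ((p.2 + c₂) / c₁)
          - 2 * c₁ ^ 2 * Real.exp (-((p.2 + c₂) / c₁))) * ((Real.sqrt (Rf c₁ c₂ p))⁻¹) ^ 3 := by
  have h : HasFDerivAt (Ut c₁ c₂) _ p :=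
    (hasFDerivAt_N c₁ c₂ p).mul (hasFDerivAt_invsqrt c₁ c₂ hp)
  rw [h.fderiv]
  have hs := sqrt_ne c₁ c₂ hp
  have hs2 : Real.sqrt (Rf c₁ c₂ p) * Real.sqrt (Rf c₁ c₂ p) = Rf c₁ c₂ p :=
    Real.mul_self_sqrt hp.le
  simp [smul_eq_mul]
  set s := Real.sqrt (Rf c₁ c₂ p) with hsdef
  set e := Real.exp ((p.2 + c₂) / c₁) with hedef
  set f := Real.exp (-((p.2 + c₂) / c₁)) with hfdef
  field_simp
  linear_combination (0:ℝ) * hs2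

lemma pt_Ut (c₁ c₂ : ℝ) (hc₁ : c₁ ≠ 0) {p : ℝ × ℝ} (hp : 0 < Rf c₁ c₂ p) :
    fderiv ℝ (Ut c₁ c₂) p (0, 1)
      = (2⁻¹ * Real.exp ((p.2 + c₂) / c₁) * c₁⁻¹ + 2 * c₁ * Real.exp (-((p.2 + c₂) / c₁)))
          * (Real.sqrt (Rf c₁ c₂ p))⁻¹
        - 2 * (2⁻¹ * Real.exp ((p.2 + c₂) / c₁)
            - 2 * c₁ ^ 2 * Real.exp (-((p.2 + c₂) / c₁))) ^ 2
          * ((Real.sqrt (Rf c₁ c₂ p))⁻¹) ^ 3 := by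
  have h : HasFDerivAt (Ut c₁ c₂) _ p :=
    (hasFDerivAt_N c₁ c₂ p).mul (hasFDerivAt_invsqrt c₁ c₂ hp)
  rw [h.fderiv]
  have hs := sqrt_ne c₁ c₂ hp
  have hs2 : Real.sqrt (Rf c₁ c₂ p) * Real.sqrt (Rf c₁ c₂ p) = Rf c₁ c₂ p :=
    Real.mul_self_sqrt hp.le
  simp [smul_eq_mul]
  set s := Real.sqrt (Rf c₁ c₂ p) with hsdef
  set e := Real.exp ((p.2 + c₂) / c₁) with hedef
  set f := Real.exp (-((p.2 + c₂) / c₁)) with hfdef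
  field_simp
  linear_combination (0:ℝ) * hs2


end BI3

/-- Group-invariant solution associated to the rotation symmetry `v₅ = −u∂ₓ + x∂_u`:
`u = ½√(2c₁ e^{(t+c₂)/c₁} + 8c₁³ e^{−(t+c₂)/c₁} − 4x² − 8c₁²)`. -/
theorem bornInfeld_invariant_solution_v5_first
    (c₁ c₂ : ℝ) (hc₁ : c₁ ≠ 0) :
    IsBISolution
      (fun p : ℝ × ℝ => (1 / 2) * Real.sqrt
        (2 * c₁ * Real.exp ((p.2 + c₂) / c₁) + 8 * c₁ ^ 3 * Real.exp (-((p.2 + c₂) / c₁))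
          - 4 * p.1 ^ 2 - 8 * c₁ ^ 2))
      {p : ℝ × ℝ |
        2 * c₁ * Real.exp ((p.2 + c₂) / c₁) + 8 * c₁ ^ 3 * Real.exp (-((p.2 + c₂) / c₁))
          - 4 * p.1 ^ 2 - 8 * c₁ ^ 2 > 0} := by
  have hΩ : IsOpen {p : ℝ × ℝ | 0 < Rf c₁ c₂ p} := isOpen_Omega c₁ c₂ hc₁
  show IsBISolution (uf c₁ c₂) {p : ℝ × ℝ | 0 < Rf c₁ c₂ p}
  constructor
  · exact ⟨{p : ℝ × ℝ | 0 < Rf c₁ c₂ p}, hΩ, le_refl _, contDiffOn_u c₁ c₂ hc₁⟩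
  · intro p hp
    have hpR : 0 < Rf c₁ c₂ p := hp
    have hevx : px (uf c₁ c₂) =ᶠ[nhds p] Ux c₁ c₂ :=
      Filter.eventuallyEq_of_mem (hΩ.mem_nhds hp) (fun q hq => px_uf c₁ c₂ hc₁ hq)
    have hevt : pt (uf c₁ c₂) =ᶠ[nhds p] Ut c₁ c₂ :=
      Filter.eventuallyEq_of_mem (hΩ.mem_nhds hp) (fun q hq => pt_uf c₁ c₂ hc₁ hq)
    have h1 : px (px (uf c₁ c₂)) p = fderiv ℝ (Ux c₁ c₂) p (1, 0) := by
      rw [px, hevx.fderiv_eq]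
    have h2 : px (pt (uf c₁ c₂)) p = fderiv ℝ (Ut c₁ c₂) p (1, 0) := by
      rw [px, hevt.fderiv_eq]
    have h3 : pt (pt (uf c₁ c₂)) p = fderiv ℝ (Ut c₁ c₂) p (0, 1) := by
      rw [pt, hevt.fderiv_eq]
    rw [h1, h2, h3, px_uf c₁ c₂ hc₁ hpR, pt_uf c₁ c₂ hc₁ hpR,
      px_Ux c₁ c₂ hc₁ hpR, px_Ut c₁ c₂ hc₁ hpR, pt_Ut c₁ c₂ hc₁ hpR]
    rw [Ux, Ut]
    have hs := sqrt_ne c₁ c₂ hpR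
    have hs2 : Real.sqrt (Rf c₁ c₂ p) * Real.sqrt (Rf c₁ c₂ p) = Rf c₁ c₂ p :=
      Real.mul_self_sqrt hpR.le
    have hef : Real.exp ((p.2 + c₂) / c₁) * Real.exp (-((p.2 + c₂) / c₁)) = 1 := by
      rw [← Real.exp_add]; simp
    have hRdef : Rf c₁ c₂ p = 2 * c₁ * Real.exp ((p.2 + c₂) / c₁)
        + 8 * c₁ ^ 3 * Real.exp (-((p.2 + c₂) / c₁)) - 4 * p.1 ^ 2 - 8 * c₁ ^ 2 := rfl
    set s := Real.sqrt (Rf c₁ c₂ p) with hsdef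
    set e := Real.exp ((p.2 + c₂) / c₁) with hedef
    set f := Real.exp (-((p.2 + c₂) / c₁)) with hfdef
    clear_value s e f
    rw [hRdef] at hs2 ⊢
    field_simp
    linear_combination
      ((-2 * s ^ 2 * e) + (-2 * c₁ * e ^ 2) + (-8 * c₁ ^ 2 * s ^ 2 * f) + (64 * c₁ ^ 3) + (-48 * c₁ ^ 3 * e * f) + (2097152 * c₁ ^ 3 * s * p.1 ^ 10) + (-2097152 * c₁ ^ 3 * s * e * f * p.1 ^ 10) + (-524288 * c₁ ^ 3 * s ^ 3 * p.1 ^ 8) + (524288 * c₁ ^ 3 * s ^ 3 * e * f * p.1 ^ 8) + (131072 * c₁ ^ 3 * s ^ 5 * p.1 ^ 6) + (-131072 * c₁ ^ 3 * s ^ 5 * e * f * p.1 ^ 6) + (-32768 * c₁ ^ 3 * s ^ 7 * p.1 ^ 4) + (32768 * c₁ ^ 3 * s ^ 7 * e * f * p.1 ^ 4) + (8192 * c₁ ^ 3 * s ^ 9 * p.1 ^ 2) + (-8192 * c₁ ^ 3 * s ^ 9 * e * f * p.1 ^ 2) + (-5242880 * c₁ ^ 4 * s * e * p.1 ^ 8)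 + (5242880 * c₁ ^ 4 * s * e ^ 2 * f * p.1 ^ 8) + (1048576 * c₁ ^ 4 * s ^ 3 * e * p.1 ^ 6) + (-1048576 * c₁ ^ 4 * s ^ 3 * e ^ 2 * f * p.1 ^ 6) + (-196608 * c₁ ^ 4 * s ^ 5 * e * p.1 ^ 4) + (196608 * c₁ ^ 4 * s ^ 5 * e ^ 2 * f * p.1 ^ 4) + (32768 * c₁ ^ 4 * s ^ 7 * e * p.1 ^ 2) + (-32768 * c₁ ^ 4 * s ^ 7 * e ^ 2 * f * p.1 ^ 2) + (-4096 * c₁ ^ 4 * s ^ 9 * e) + (4096 * c₁ ^ 4 * s ^ 9 * e ^ 2 * f) + (-32 * c₁ ^ 5 * f ^ 2) + (20971520 * c₁ ^ 5 * s * p.1 ^ 8) + (-20971520 * c₁ ^ 5 * s * e * f * p.1 ^ 8) + (5242880 * c₁ ^ 5 * s * e ^ 2 * p.1 ^ 6) + (-5242880 * c₁ ^ 5 * s * e ^ 3 * f * p.1 ^ 6) + (-4194304 * c₁ ^ 5 * s ^ 3 * p.1 ^ 6) + (4194304 * c₁ ^ 5 * s ^ 3 * e * f * p.1 ^ 6)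 + (-786432 * c₁ ^ 5 * s ^ 3 * e ^ 2 * p.1 ^ 4) + (786432 * c₁ ^ 5 * s ^ 3 * e ^ 3 * f * p.1 ^ 4) + (786432 * c₁ ^ 5 * s ^ 5 * p.1 ^ 4) + (-786432 * c₁ ^ 5 * s ^ 5 * e * f * p.1 ^ 4) + (98304 * c₁ ^ 5 * s ^ 5 * e ^ 2 * p.1 ^ 2) + (-98304 * c₁ ^ 5 * s ^ 5 * e ^ 3 * f * p.1 ^ 2) + (-131072 * c₁ ^ 5 * s ^ 7 * p.1 ^ 2) + (131072 * c₁ ^ 5 * s ^ 7 * e * f * p.1 ^ 2) + (-8192 * c₁ ^ 5 * s ^ 7 * e ^ 2) + (8192 * c₁ ^ 5 * s ^ 7 * e ^ 3 * f) + (16384 * c₁ ^ 5 * s ^ 9) + (-16384 * c₁ ^ 5 * s ^ 9 * e * f) + (-20971520 * c₁ ^ 6 * s * f * p.1 ^ 8) + (-41943040 * c₁ ^ 6 * s * e * p.1 ^ 6) + (20971520 * c₁ ^ 6 * s * e * f ^ 2 * p.1 ^ 8) + (41943040 * c₁ ^ 6 * s * e ^ 2 * f * p.1 ^ 6) + (-2621440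 * c₁ ^ 6 * s * e ^ 3 * p.1 ^ 4) + (2621440 * c₁ ^ 6 * s * e ^ 4 * f * p.1 ^ 4) + (4194304 * c₁ ^ 6 * s ^ 3 * f * p.1 ^ 6) + (6291456 * c₁ ^ 6 * s ^ 3 * e * p.1 ^ 4) + (-4194304 * c₁ ^ 6 * s ^ 3 * e * f ^ 2 * p.1 ^ 6) + (-6291456 * c₁ ^ 6 * s ^ 3 * e ^ 2 * f * p.1 ^ 4) + (262144 * c₁ ^ 6 * s ^ 3 * e ^ 3 * p.1 ^ 2) + (-262144 * c₁ ^ 6 * s ^ 3 * e ^ 4 * f * p.1 ^ 2) + (-786432 * c₁ ^ 6 * s ^ 5 * f * p.1 ^ 4) + (-786432 * c₁ ^ 6 * s ^ 5 * e * p.1 ^ 2) + (786432 * c₁ ^ 6 * s ^ 5 * e * f ^ 2 * p.1 ^ 4) + (786432 * c₁ ^ 6 * s ^ 5 * e ^ 2 * f * p.1 ^ 2) + (-16384 * c₁ ^ 6 * s ^ 5 * e ^ 3) + (16384 * c₁ ^ 6 * s ^ 5 * e ^ 4 * f) + (131072 * c₁ ^ 6 * s ^ 7 * f * p.1 ^ 2)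 + (65536 * c₁ ^ 6 * s ^ 7 * e) + (-131072 * c₁ ^ 6 * s ^ 7 * e * f ^ 2 * p.1 ^ 2) + (-65536 * c₁ ^ 6 * s ^ 7 * e ^ 2 * f) + (-16384 * c₁ ^ 6 * s ^ 9 * f) + (16384 * c₁ ^ 6 * s ^ 9 * e * f ^ 2) + (83886080 * c₁ ^ 7 * s * p.1 ^ 6) + (-41943040 * c₁ ^ 7 * s * e * f * p.1 ^ 6) + (31457280 * c₁ ^ 7 * s * e ^ 2 * p.1 ^ 4) + (-41943040 * c₁ ^ 7 * s * e ^ 2 * f ^ 2 * p.1 ^ 6) + (-31457280 * c₁ ^ 7 * s * e ^ 3 * f * p.1 ^ 4) + (655360 * c₁ ^ 7 * s * e ^ 4 * p.1 ^ 2) + (-655360 * c₁ ^ 7 * s * e ^ 5 * f * p.1 ^ 2) + (-12582912 * c₁ ^ 7 * s ^ 3 * p.1 ^ 4) + (6291456 * c₁ ^ 7 * s ^ 3 * e * f * p.1 ^ 4) + (-3145728 * c₁ ^ 7 * s ^ 3 * e ^ 2 * p.1 ^ 2) + (6291456 * c₁ ^ 7 * s ^ 3 * e ^ 2 * f ^ 2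 * p.1 ^ 4) + (3145728 * c₁ ^ 7 * s ^ 3 * e ^ 3 * f * p.1 ^ 2) + (-32768 * c₁ ^ 7 * s ^ 3 * e ^ 4) + (32768 * c₁ ^ 7 * s ^ 3 * e ^ 5 * f) + (1572864 * c₁ ^ 7 * s ^ 5 * p.1 ^ 2) + (-786432 * c₁ ^ 7 * s ^ 5 * e * f * p.1 ^ 2) + (196608 * c₁ ^ 7 * s ^ 5 * e ^ 2) + (-786432 * c₁ ^ 7 * s ^ 5 * e ^ 2 * f ^ 2 * p.1 ^ 2) + (-196608 * c₁ ^ 7 * s ^ 5 * e ^ 3 * f) + (-131072 * c₁ ^ 7 * s ^ 7) + (65536 * c₁ ^ 7 * s ^ 7 * e * f) + (65536 * c₁ ^ 7 * s ^ 7 * e ^ 2 * f ^ 2) + (-167772160 * c₁ ^ 8 * s * f * p.1 ^ 6) + (-125829120 * c₁ ^ 8 * s * e * p.1 ^ 4) + (167772160 * c₁ ^ 8 * s * e * f ^ 2 * p.1 ^ 6) + (94371840 * c₁ ^ 8 * s * e ^ 2 * f * p.1 ^ 4) + (-10485760 * c₁ ^ 8 * s * e ^ 3 * p.1 ^ 2)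 + (31457280 * c₁ ^ 8 * s * e ^ 3 * f ^ 2 * p.1 ^ 4) + (10485760 * c₁ ^ 8 * s * e ^ 4 * f * p.1 ^ 2) + (-65536 * c₁ ^ 8 * s * e ^ 5) + (65536 * c₁ ^ 8 * s * e ^ 6 * f) + (25165824 * c₁ ^ 8 * s ^ 3 * f * p.1 ^ 4) + (12582912 * c₁ ^ 8 * s ^ 3 * e * p.1 ^ 2) + (-25165824 * c₁ ^ 8 * s ^ 3 * e * f ^ 2 * p.1 ^ 4) + (-9437184 * c₁ ^ 8 * s ^ 3 * e ^ 2 * f * p.1 ^ 2) + (524288 * c₁ ^ 8 * s ^ 3 * e ^ 3) + (-3145728 * c₁ ^ 8 * s ^ 3 * e ^ 3 * f ^ 2 * p.1 ^ 2) + (-524288 * c₁ ^ 8 * s ^ 3 * e ^ 4 * f) + (-3145728 * c₁ ^ 8 * s ^ 5 * f * p.1 ^ 2) + (-786432 * c₁ ^ 8 * s ^ 5 * e) + (3145728 * c₁ ^ 8 * s ^ 5 * e * f ^ 2 * p.1 ^ 2) + (589824 * c₁ ^ 8 * s ^ 5 * e ^ 2 * f) + (196608 * c₁ ^ 8 * s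 ^ 5 * e ^ 3 * f ^ 2) + (262144 * c₁ ^ 8 * s ^ 7 * f) + (-262144 * c₁ ^ 8 * s ^ 7 * e * f ^ 2) + (167772160 * c₁ ^ 9 * s * p.1 ^ 4) + (83886080 * c₁ ^ 9 * s * f ^ 2 * p.1 ^ 6) + (83886080 * c₁ ^ 9 * s * e * f * p.1 ^ 4) + (-83886080 * c₁ ^ 9 * s * e * f ^ 3 * p.1 ^ 6) + (62914560 * c₁ ^ 9 * s * e ^ 2 * p.1 ^ 2) + (-251658240 * c₁ ^ 9 * s * e ^ 2 * f ^ 2 * p.1 ^ 4) + (-52428800 * c₁ ^ 9 * s * e ^ 3 * f * p.1 ^ 2) + (1310720 * c₁ ^ 9 * s * e ^ 4) + (-10485760 * c₁ ^ 9 * s * e ^ 4 * f ^ 2 * p.1 ^ 2) + (-1310720 * c₁ ^ 9 * s * e ^ 5 * f) + (-16777216 * c₁ ^ 9 * s ^ 3 * p.1 ^ 2) + (-12582912 * c₁ ^ 9 * s ^ 3 * f ^ 2 * p.1 ^ 4) + (-8388608 * c₁ ^ 9 * s ^ 3 * e * f * p.1 ^ 2) + (12582912 * c₁ ^ 9 *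 s ^ 3 * e * f ^ 3 * p.1 ^ 4) + (-3145728 * c₁ ^ 9 * s ^ 3 * e ^ 2) + (25165824 * c₁ ^ 9 * s ^ 3 * e ^ 2 * f ^ 2 * p.1 ^ 2) + (2621440 * c₁ ^ 9 * s ^ 3 * e ^ 3 * f) + (524288 * c₁ ^ 9 * s ^ 3 * e ^ 4 * f ^ 2) + (1048576 * c₁ ^ 9 * s ^ 5) + (1572864 * c₁ ^ 9 * s ^ 5 * f ^ 2 * p.1 ^ 2) + (524288 * c₁ ^ 9 * s ^ 5 * e * f) + (-1572864 * c₁ ^ 9 * s ^ 5 * e * f ^ 3 * p.1 ^ 2) + (-1572864 * c₁ ^ 9 * s ^ 5 * e ^ 2 * f ^ 2) + (-131072 * c₁ ^ 9 * s ^ 7 * f ^ 2) + (131072 * c₁ ^ 9 * s ^ 7 * e * f ^ 3) + (-503316480 * c₁ ^ 10 * s * f * p.1 ^ 4) + (-167772160 * c₁ ^ 10 * s * e * p.1 ^ 2) + (377487360 * c₁ ^ 10 * s * e * f ^ 2 * p.1 ^ 4) + (41943040 * c₁ ^ 10 * s * e ^ 2 * f * p.1 ^ 2) + (125829120 * c₁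 ^ 10 * s * e ^ 2 * f ^ 3 * p.1 ^ 4) + (-10485760 * c₁ ^ 10 * s * e ^ 3) + (125829120 * c₁ ^ 10 * s * e ^ 3 * f ^ 2 * p.1 ^ 2) + (9175040 * c₁ ^ 10 * s * e ^ 4 * f) + (1310720 * c₁ ^ 10 * s * e ^ 5 * f ^ 2) + (50331648 * c₁ ^ 10 * s ^ 3 * f * p.1 ^ 2) + (8388608 * c₁ ^ 10 * s ^ 3 * e) + (-37748736 * c₁ ^ 10 * s ^ 3 * e * f ^ 2 * p.1 ^ 2) + (-2097152 * c₁ ^ 10 * s ^ 3 * e ^ 2 * f) + (-12582912 * c₁ ^ 10 * s ^ 3 * e ^ 2 * f ^ 3 * p.1 ^ 2) + (-6291456 * c₁ ^ 10 * s ^ 3 * e ^ 3 * f ^ 2) + (-3145728 * c₁ ^ 10 * s ^ 5 * f) + (2359296 * c₁ ^ 10 * s ^ 5 * e * f ^ 2) + (786432 * c₁ ^ 10 * s ^ 5 * e ^ 2 * f ^ 3) + (167772160 * c₁ ^ 11 * s * p.1 ^ 2) + (503316480 * c₁ ^ 11 * s * f ^ 2 * p.1 ^ 4) + (335544320 * c₁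 ^ 11 * s * e * f * p.1 ^ 2) + (-503316480 * c₁ ^ 11 * s * e * f ^ 3 * p.1 ^ 4) + (41943040 * c₁ ^ 11 * s * e ^ 2) + (-440401920 * c₁ ^ 11 * s * e ^ 2 * f ^ 2 * p.1 ^ 2) + (-20971520 * c₁ ^ 11 * s * e ^ 3 * f) + (-62914560 * c₁ ^ 11 * s * e ^ 3 * f ^ 3 * p.1 ^ 2) + (-20971520 * c₁ ^ 11 * s * e ^ 4 * f ^ 2) + (-8388608 * c₁ ^ 11 * s ^ 3) + (-50331648 * c₁ ^ 11 * s ^ 3 * f ^ 2 * p.1 ^ 2) + (-16777216 * c₁ ^ 11 * s ^ 3 * e * f) + (50331648 * c₁ ^ 11 * s ^ 3 * e * f ^ 3 * p.1 ^ 2) + (22020096 * c₁ ^ 11 * s ^ 3 * e ^ 2 * f ^ 2) + (3145728 * c₁ ^ 11 * s ^ 3 * e ^ 3 * f ^ 3) + (3145728 * c₁ ^ 11 * s ^ 5 * f ^ 2) + (-3145728 * c₁ ^ 11 * s ^ 5 * e * f ^ 3) + (-671088640 * c₁ ^ 12 * s * f * p.1 ^ 2) + (-167772160 * c₁ ^ 12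 * s * f ^ 3 * p.1 ^ 4) + (-83886080 * c₁ ^ 12 * s * e) + (167772160 * c₁ ^ 12 * s * e * f ^ 2 * p.1 ^ 2) + (167772160 * c₁ ^ 12 * s * e * f ^ 4 * p.1 ^ 4) + (-41943040 * c₁ ^ 12 * s * e ^ 2 * f) + (503316480 * c₁ ^ 12 * s * e ^ 2 * f ^ 3 * p.1 ^ 2) + (115343360 * c₁ ^ 12 * s * e ^ 3 * f ^ 2) + (10485760 * c₁ ^ 12 * s * e ^ 4 * f ^ 3) + (33554432 * c₁ ^ 12 * s ^ 3 * f) + (16777216 * c₁ ^ 12 * s ^ 3 * f ^ 3 * p.1 ^ 2) + (-8388608 * c₁ ^ 12 * s ^ 3 * e * f ^ 2) + (-16777216 * c₁ ^ 12 * s ^ 3 * e * f ^ 4 * p.1 ^ 2) + (-25165824 * c₁ ^ 12 * s ^ 3 * e ^ 2 * f ^ 3) + (-1048576 * c₁ ^ 12 * s ^ 5 * f ^ 3) + (1048576 * c₁ ^ 12 * s ^ 5 * e * f ^ 4) + (67108864 * c₁ ^ 13 * s) + (1006632960 * c₁ ^ 13 * s * f ^ 2 * p.1 ^ 2) + (268435456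 * c₁ ^ 13 * s * e * f) + (-838860800 * c₁ ^ 13 * s * e * f ^ 3 * p.1 ^ 2) + (-209715200 * c₁ ^ 13 * s * e ^ 2 * f ^ 2) + (-167772160 * c₁ ^ 13 * s * e ^ 2 * f ^ 4 * p.1 ^ 2) + (-125829120 * c₁ ^ 13 * s * e ^ 3 * f ^ 3) + (-50331648 * c₁ ^ 13 * s ^ 3 * f ^ 2) + (41943040 * c₁ ^ 13 * s ^ 3 * e * f ^ 3) + (8388608 * c₁ ^ 13 * s ^ 3 * e ^ 2 * f ^ 4) + (-335544320 * c₁ ^ 14 * s * f) + (-671088640 * c₁ ^ 14 * s * f ^ 3 * p.1 ^ 2) + (-167772160 * c₁ ^ 14 * s * e * f ^ 2) + (671088640 * c₁ ^ 14 * s * e * f ^ 4 * p.1 ^ 2) + (461373440 * c₁ ^ 14 * s * e ^ 2 * f ^ 3) + (41943040 * c₁ ^ 14 * s * e ^ 3 * f ^ 4) + (33554432 * c₁ ^ 14 * s ^ 3 * f ^ 3) + (-33554432 * c₁ ^ 14 * s ^ 3 * e * f ^ 4) + (671088640 * c₁ ^ 15 * s * f ^ 2) + (167772160 * c₁ ^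 15 * s * f ^ 4 * p.1 ^ 2) + (-335544320 * c₁ ^ 15 * s * e * f ^ 3) + (-167772160 * c₁ ^ 15 * s * e * f ^ 5 * p.1 ^ 2) + (-335544320 * c₁ ^ 15 * s * e ^ 2 * f ^ 4) + (-8388608 * c₁ ^ 15 * s ^ 3 * f ^ 4) + (8388608 * c₁ ^ 15 * s ^ 3 * e * f ^ 5) + (-671088640 * c₁ ^ 16 * s * f ^ 3) + (587202560 * c₁ ^ 16 * s * e * f ^ 4) + (83886080 * c₁ ^ 16 * s * e ^ 2 * f ^ 5) + (335544320 * c₁ ^ 17 * s * f ^ 4) + (-335544320 * c₁ ^ 17 * s * e * f ^ 5) + (-67108864 * c₁ ^ 18 * s * f ^ 5) + (67108864 * c₁ ^ 18 * s * e * f ^ 6)) * hs2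
      + ((256 * c₁ ^ 3 * p.1 ^ 2) + (8388608 * c₁ ^ 3 * s * p.1 ^ 12) + (8192 * c₁ ^ 3 * s ^ 11 * p.1 ^ 2) + (-128 * c₁ ^ 4 * e) + (-25165824 * c₁ ^ 4 * s * e * p.1 ^ 10) + (-4096 * c₁ ^ 4 * s ^ 11 * e) + (512 * c₁ ^ 5) + (100663296 * c₁ ^ 5 * s * p.1 ^ 10) + (31457280 * c₁ ^ 5 * s * e ^ 2 * p.1 ^ 8) + (16384 * c₁ ^ 5 * s ^ 11) + (-512 * c₁ ^ 6 * f) + (-100663296 * c₁ ^ 6 * s * f * p.1 ^ 10) + (-251658240 * c₁ ^ 6 * s * e * p.1 ^ 8) + (-20971520 * c₁ ^ 6 * s * e ^ 3 * p.1 ^ 6) + (-16384 * c₁ ^ 6 * s ^ 11 * f) + (503316480 * c₁ ^ 7 * s * p.1 ^ 8) + (251658240 * c₁ ^ 7 * s * e * f * p.1 ^ 8) + (251658240 * c₁ ^ 7 * s * e ^ 2 * p.1 ^ 6) + (7864320 * c₁ ^ 7 * s * e ^ 4 * p.1 ^ 4) + (-1006632960 * c₁ ^ 8 * s * f * p.1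 ^ 8) + (-1006632960 * c₁ ^ 8 * s * e * p.1 ^ 6) + (-251658240 * c₁ ^ 8 * s * e ^ 2 * f * p.1 ^ 6) + (-125829120 * c₁ ^ 8 * s * e ^ 3 * p.1 ^ 4) + (-1572864 * c₁ ^ 8 * s * e ^ 5 * p.1 ^ 2) + (1342177280 * c₁ ^ 9 * s * p.1 ^ 6) + (503316480 * c₁ ^ 9 * s * f ^ 2 * p.1 ^ 8) + (2013265920 * c₁ ^ 9 * s * e * f * p.1 ^ 6) + (754974720 * c₁ ^ 9 * s * e ^ 2 * p.1 ^ 4) + (125829120 * c₁ ^ 9 * s * e ^ 3 * f * p.1 ^ 4) + (31457280 * c₁ ^ 9 * s * e ^ 4 * p.1 ^ 2) + (131072 * c₁ ^ 9 * s * e ^ 6) + (-4026531840 * c₁ ^ 10 * s * f * p.1 ^ 6) + (-2013265920 * c₁ ^ 10 * s * e * p.1 ^ 4) + (-1006632960 * c₁ ^ 10 * s * e * f ^ 2 * p.1 ^ 6) + (-1509949440 * c₁ ^ 10 * s * e ^ 2 * f * p.1 ^ 4) + (-251658240 * c₁ ^ 10 * s * e ^ 3 * p.1 ^ 2) + (-31457280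 * c₁ ^ 10 * s * e ^ 4 * f * p.1 ^ 2) + (-3145728 * c₁ ^ 10 * s * e ^ 5) + (2013265920 * c₁ ^ 11 * s * p.1 ^ 4) + (4026531840 * c₁ ^ 11 * s * f ^ 2 * p.1 ^ 6) + (6039797760 * c₁ ^ 11 * s * e * f * p.1 ^ 4) + (1006632960 * c₁ ^ 11 * s * e ^ 2 * p.1 ^ 2) + (754974720 * c₁ ^ 11 * s * e ^ 2 * f ^ 2 * p.1 ^ 4) + (503316480 * c₁ ^ 11 * s * e ^ 3 * f * p.1 ^ 2) + (31457280 * c₁ ^ 11 * s * e ^ 4) + (3145728 * c₁ ^ 11 * s * e ^ 5 * f) + (-8053063680 * c₁ ^ 12 * s * f * p.1 ^ 4) + (-1342177280 * c₁ ^ 12 * s * f ^ 3 * p.1 ^ 6) + (-2013265920 * c₁ ^ 12 * s * e * p.1 ^ 2) + (-6039797760 * c₁ ^ 12 * s * e * f ^ 2 * p.1 ^ 4) + (-3019898880 * c₁ ^ 12 * s * e ^ 2 * f * p.1 ^ 2) + (-167772160 * c₁ ^ 12 * s * e ^ 3) + (-251658240 * c₁ ^ 12 * s * e ^ 3 * f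 ^ 2 * p.1 ^ 2) + (-62914560 * c₁ ^ 12 * s * e ^ 4 * f) + (1610612736 * c₁ ^ 13 * s * p.1 ^ 2) + (12079595520 * c₁ ^ 13 * s * f ^ 2 * p.1 ^ 4) + (8053063680 * c₁ ^ 13 * s * e * f * p.1 ^ 2) + (2013265920 * c₁ ^ 13 * s * e * f ^ 3 * p.1 ^ 4) + (503316480 * c₁ ^ 13 * s * e ^ 2) + (3019898880 * c₁ ^ 13 * s * e ^ 2 * f ^ 2 * p.1 ^ 2) + (503316480 * c₁ ^ 13 * s * e ^ 3 * f) + (31457280 * c₁ ^ 13 * s * e ^ 4 * f ^ 2) + (-8053063680 * c₁ ^ 14 * s * f * p.1 ^ 2) + (-8053063680 * c₁ ^ 14 * s * f ^ 3 * p.1 ^ 4) + (-805306368 * c₁ ^ 14 * s * e) + (-12079595520 * c₁ ^ 14 * s * e * f ^ 2 * p.1 ^ 2) + (-2013265920 * c₁ ^ 14 * s * e ^ 2 * f) + (-1006632960 * c₁ ^ 14 * s * e ^ 2 * f ^ 3 * p.1 ^ 2) + (-503316480 * c₁ ^ 14 * s * e ^ 3 * f ^ 2) + (536870912 * c₁ ^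 15 * s) + (16106127360 * c₁ ^ 15 * s * f ^ 2 * p.1 ^ 2) + (2013265920 * c₁ ^ 15 * s * f ^ 4 * p.1 ^ 4) + (4026531840 * c₁ ^ 15 * s * e * f) + (8053063680 * c₁ ^ 15 * s * e * f ^ 3 * p.1 ^ 2) + (3019898880 * c₁ ^ 15 * s * e ^ 2 * f ^ 2) + (167772160 * c₁ ^ 15 * s * e ^ 3 * f ^ 3) + (-3221225472 * c₁ ^ 16 * s * f) + (-16106127360 * c₁ ^ 16 * s * f ^ 3 * p.1 ^ 2) + (-8053063680 * c₁ ^ 16 * s * e * f ^ 2) + (-2013265920 * c₁ ^ 16 * s * e * f ^ 4 * p.1 ^ 2) + (-2013265920 * c₁ ^ 16 * s * e ^ 2 * f ^ 3) + (8053063680 * c₁ ^ 17 * s * f ^ 2) + (8053063680 * c₁ ^ 17 * s * f ^ 4 * p.1 ^ 2) + (8053063680 * c₁ ^ 17 * s * e * f ^ 3) + (503316480 * c₁ ^ 17 * s * e ^ 2 * f ^ 4) + (-10737418240 * c₁ ^ 18 * s * f ^ 3) + (-1610612736 * c₁ ^ 18 * s * f ^ 5 * p.1 ^ 2) + (-4026531840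 * c₁ ^ 18 * s * e * f ^ 4) + (8053063680 * c₁ ^ 19 * s * f ^ 4) + (805306368 * c₁ ^ 19 * s * e * f ^ 5) + (-3221225472 * c₁ ^ 20 * s * f ^ 5) + (536870912 * c₁ ^ 21 * s * f ^ 6)) * hef
end

section
/- Let c₁ ≠ 0 and c₂ be real constants, and define R(x,t) = 2c₁·e^{−(t+c₂)/c₁} + 8c₁³·e^{(t+c₂)/c₁} − 4x² − 8c₁². Then the function u(x,t) = (1/2)·√(R(x,t)) is a solution of the Born-Infeld equation on the open set Ω = {(x,t) ∈ ℝ² : R(x,t) > 0}. (This is the second family of group-invariant solutions associated to the rotation symmetry v₅ = −u∂_x + x∂_u.) -/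
namespace BIv5aux

def HasPartials (f : ℝ × ℝ → ℝ) (p : ℝ × ℝ) (fx ft : ℝ) : Prop :=
  ∃ L : ℝ × ℝ →L[ℝ] ℝ, HasFDerivAt f L p ∧ L (1, 0) = fx ∧ L (0, 1) = ft

namespace HasPartials

variable {f g : ℝ × ℝ → ℝ} {p : ℝ × ℝ} {fx ft gx gt : ℝ}

theorem px_eq (h : HasPartials f p fx ft) : px f p = fx := by
  obtain ⟨L, hL, h1, _⟩ := h; rw [px, hL.fderiv]; exact h1

theorem pt_eq (h : HasPartials f p fx ft) : pt f p = ft := by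
  obtain ⟨L, hL, _, h2⟩ := h; rw [pt, hL.fderiv]; exact h2

theorem of_eq {fx' ft' : ℝ} (h : HasPartials f p fx ft) (hx : fx = fx') (ht : ft = ft') :
    HasPartials f p fx' ft' := hx ▸ ht ▸ h

theorem add (hf : HasPartials f p fx ft) (hg : HasPartials g p gx gt) :
    HasPartials (fun q => f q + g q) p (fx + gx) (ft + gt) := by
  obtain ⟨L, hL, h1, h2⟩ := hf; obtain ⟨M, hM, h3, h4⟩ := hg
  exact ⟨L + M, hL.add hM, by simp [h1, h3], by simp [h2, h4]⟩

theorem sub (hf : HasPartials f p fx ft) (hg : HasPartials g p gx gt) :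
    HasPartials (fun q => f q - g q) p (fx - gx) (ft - gt) := by
  obtain ⟨L, hL, h1, h2⟩ := hf; obtain ⟨M, hM, h3, h4⟩ := hg
  exact ⟨L - M, hL.sub hM, by simp [h1, h3], by simp [h2, h4]⟩

theorem neg (hf : HasPartials f p fx ft) : HasPartials (fun q => -f q) p (-fx) (-ft) := by
  obtain ⟨L, hL, h1, h2⟩ := hf
  exact ⟨-L, hL.neg, by simp [h1], by simp [h2]⟩

theorem const_mul (hf : HasPartials f p fx ft) (c : ℝ) :
    HasPartials (fun q => c * f q) p (c * fx) (c * ft) := by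
  obtain ⟨L, hL, h1, h2⟩ := hf
  exact ⟨c • L, hL.const_mul c, by simp [h1], by simp [h2]⟩

theorem div_const (hf : HasPartials f p fx ft) (c : ℝ) :
    HasPartials (fun q => f q / c) p (fx / c) (ft / c) := by
  simpa [div_eq_inv_mul] using hf.const_mul c⁻¹

theorem mul (hf : HasPartials f p fx ft) (hg : HasPartials g p gx gt) :
    HasPartials (fun q => f q * g q) p (f p * gx + g p * fx) (f p * gt + g p * ft) := by
  obtain ⟨L, hL, h1, h2⟩ := hf; obtain ⟨M, hM, h3, h4⟩ := hg
  exact ⟨f p • M + g p • L, hL.mul hM, by simp [h1, h3, smul_eq_mul],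
    by simp [h2, h4, smul_eq_mul]⟩

theorem comp {g : ℝ → ℝ} {g' : ℝ} (hg : HasDerivAt g g' (f p)) (hf : HasPartials f p fx ft) :
    HasPartials (fun q => g (f q)) p (g' * fx) (g' * ft) := by
  obtain ⟨L, hL, h1, h2⟩ := hf
  exact ⟨g' • L, hg.comp_hasFDerivAt p hL, by simp [h1, smul_eq_mul], by simp [h2, smul_eq_mul]⟩

theorem inv (hf : HasPartials f p fx ft) (h : f p ≠ 0) :
    HasPartials (fun q => (f q)⁻¹) p (-fx / f p ^ 2) (-ft / f p ^ 2) :=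
  (HasPartials.comp (hasDerivAt_inv h) hf).of_eq (by ring) (by ring)

theorem div (hf : HasPartials f p fx ft) (hg : HasPartials g p gx gt) (h : g p ≠ 0) :
    HasPartials (fun q => f q / g q) p ((fx * g p - f p * gx) / g p ^ 2)
      ((ft * g p - f p * gt) / g p ^ 2) := by
  simp only [div_eq_mul_inv]
  exact (hf.mul (hg.inv h)).of_eq (by field_simp; ring) (by field_simp; ring)

end HasPartials

theorem hasPartials_fst (p : ℝ × ℝ) : HasPartials (fun q => q.1) p 1 0 :=
  ⟨ContinuousLinearMap.fst ℝ ℝ ℝ, hasFDerivAt_fst, rfl, rfl⟩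

theorem hasPartials_snd (p : ℝ × ℝ) : HasPartials (fun q => q.2) p 0 1 :=
  ⟨ContinuousLinearMap.snd ℝ ℝ ℝ, hasFDerivAt_snd, rfl, rfl⟩

theorem hasPartials_const (c : ℝ) (p : ℝ × ℝ) : HasPartials (fun _ => c) p 0 0 :=
  ⟨0, hasFDerivAt_const c p, rfl, rfl⟩

/-- The radicand. -/
noncomputable def R (c₁ c₂ : ℝ) (q : ℝ × ℝ) : ℝ :=
  2 * c₁ * Real.exp (-((q.2 + c₂) / c₁)) + 8 * c₁ ^ 3 * Real.exp ((q.2 + c₂) / c₁)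
    - 4 * q.1 ^ 2 - 8 * c₁ ^ 2

/-- t-derivative of the radicand. -/
noncomputable def RT (c₁ c₂ : ℝ) (q : ℝ × ℝ) : ℝ :=
  -2 * Real.exp (-((q.2 + c₂) / c₁)) + 8 * c₁ ^ 2 * Real.exp ((q.2 + c₂) / c₁)

/-- second t-derivative of the radicand. -/
noncomputable def RTT (c₁ c₂ : ℝ) (q : ℝ × ℝ) : ℝ :=
  2 * Real.exp (-((q.2 + c₂) / c₁)) / c₁ + 8 * c₁ * Real.exp ((q.2 + c₂) / c₁)

variable (c₁ c₂ : ℝ)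

theorem hp_s (hc₁ : c₁ ≠ 0) (p : ℝ × ℝ) :
    HasPartials (fun q : ℝ × ℝ => (q.2 + c₂) / c₁) p 0 c₁⁻¹ :=
  (((hasPartials_snd p).add (hasPartials_const c₂ p)).div_const c₁).of_eq (by norm_num)
    (by norm_num)

theorem hp_A (hc₁ : c₁ ≠ 0) (p : ℝ × ℝ) :
    HasPartials (fun q : ℝ × ℝ => Real.exp (-((q.2 + c₂) / c₁))) p 0
      (-(Real.exp (-((p.2 + c₂) / c₁)) * c₁⁻¹)) :=
  (HasPartials.comp (Real.hasDerivAt_exp _) ((hp_s c₁ c₂ hc₁ p).neg)).of_eq (by ring) (by ring)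

theorem hp_B (hc₁ : c₁ ≠ 0) (p : ℝ × ℝ) :
    HasPartials (fun q : ℝ × ℝ => Real.exp ((q.2 + c₂) / c₁)) p 0
      (Real.exp ((p.2 + c₂) / c₁) * c₁⁻¹) :=
  (HasPartials.comp (Real.hasDerivAt_exp _) (hp_s c₁ c₂ hc₁ p)).of_eq (by ring) (by ring)

theorem hp_sq (p : ℝ × ℝ) : HasPartials (fun q : ℝ × ℝ => q.1 ^ 2) p (2 * p.1) 0 :=
  (HasPartials.comp (hasDerivAt_pow 2 p.1) (hasPartials_fst p)).of_eq (by ring) (by ring)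

theorem hp_R (hc₁ : c₁ ≠ 0) (p : ℝ × ℝ) :
    HasPartials (R c₁ c₂) p (-8 * p.1) (RT c₁ c₂ p) := by
  have h := ((((hp_A c₁ c₂ hc₁ p).const_mul (2 * c₁)).add
      ((hp_B c₁ c₂ hc₁ p).const_mul (8 * c₁ ^ 3))).sub
      ((hp_sq p).const_mul 4)).sub (hasPartials_const (8 * c₁ ^ 2) p)
  exact h.of_eq (by ring) (by unfold RT; field_simp; ring)

theorem hp_RT (hc₁ : c₁ ≠ 0) (p : ℝ × ℝ) :
    HasPartials (RT c₁ c₂) p 0 (RTT c₁ c₂ p) := by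
  have h := ((hp_A c₁ c₂ hc₁ p).const_mul (-2)).add ((hp_B c₁ c₂ hc₁ p).const_mul (8 * c₁ ^ 2))
  exact h.of_eq (by ring) (by unfold RTT; field_simp)

theorem hp_W (hc₁ : c₁ ≠ 0) (p : ℝ × ℝ) (h : R c₁ c₂ p ≠ 0) :
    HasPartials (fun q => Real.sqrt (R c₁ c₂ q)) p
      (-8 * p.1 / (2 * Real.sqrt (R c₁ c₂ p))) (RT c₁ c₂ p / (2 * Real.sqrt (R c₁ c₂ p))) :=
  (HasPartials.comp (Real.hasDerivAt_sqrt h) (hp_R c₁ c₂ hc₁ p)).of_eq (by ring) (by ring)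

theorem hp_u (hc₁ : c₁ ≠ 0) (p : ℝ × ℝ) (h : R c₁ c₂ p ≠ 0) :
    HasPartials (fun q => 1 / 2 * Real.sqrt (R c₁ c₂ q)) p
      (-8 * p.1 / (4 * Real.sqrt (R c₁ c₂ p))) (RT c₁ c₂ p / (4 * Real.sqrt (R c₁ c₂ p))) :=
  ((hp_W c₁ c₂ hc₁ p h).const_mul (1 / 2)).of_eq (by ring) (by ring)


/-- u_x as a function. -/
noncomputable def UX (c₁ c₂ : ℝ) (q : ℝ × ℝ) : ℝ := -8 * q.1 / (4 * Real.sqrt (R c₁ c₂ q))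

/-- u_t as a function. -/
noncomputable def UT (c₁ c₂ : ℝ) (q : ℝ × ℝ) : ℝ := RT c₁ c₂ q / (4 * Real.sqrt (R c₁ c₂ q))

theorem hp_UX (hc₁ : c₁ ≠ 0) (p : ℝ × ℝ) (h : 0 < R c₁ c₂ p) :
    HasPartials (UX c₁ c₂) p
      ((2 * R c₁ c₂ p * (-8) - (-8 * p.1) ^ 2) / (8 * Real.sqrt (R c₁ c₂ p) ^ 3))
      ((2 * R c₁ c₂ p * 0 - (-8 * p.1) * RT c₁ c₂ p) / (8 * Real.sqrt (R c₁ c₂ p) ^ 3)) := by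
  have hw : Real.sqrt (R c₁ c₂ p) ≠ 0 := ne_of_gt (Real.sqrt_pos.2 h)
  have hw2 : Real.sqrt (R c₁ c₂ p) ^ 2 = R c₁ c₂ p := Real.sq_sqrt h.le
  have hD : (4 : ℝ) * Real.sqrt (R c₁ c₂ p) ≠ 0 := by positivity
  have hdiv := HasPartials.div ((hasPartials_fst p).const_mul (-8))
    ((hp_W c₁ c₂ hc₁ p (ne_of_gt h)).const_mul 4) hD
  refine hdiv.of_eq ?_ ?_
  · field_simp
    linear_combination (-16) * hw2
  · field_simp
    ring

theorem hp_UT (hc₁ : c₁ ≠ 0) (p : ℝ × ℝ) (h : 0 < R c₁ c₂ p) :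
    HasPartials (UT c₁ c₂) p
      ((2 * R c₁ c₂ p * 0 - (-8 * p.1) * RT c₁ c₂ p) / (8 * Real.sqrt (R c₁ c₂ p) ^ 3))
      ((2 * R c₁ c₂ p * RTT c₁ c₂ p - RT c₁ c₂ p ^ 2) / (8 * Real.sqrt (R c₁ c₂ p) ^ 3)) := by
  have hw : Real.sqrt (R c₁ c₂ p) ≠ 0 := ne_of_gt (Real.sqrt_pos.2 h)
  have hw2 : Real.sqrt (R c₁ c₂ p) ^ 2 = R c₁ c₂ p := Real.sq_sqrt h.le
  have hD : (4 : ℝ) * Real.sqrt (R c₁ c₂ p) ≠ 0 := by positivity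
  have hdiv := HasPartials.div (hp_RT c₁ c₂ hc₁ p)
    ((hp_W c₁ c₂ hc₁ p (ne_of_gt h)).const_mul 4) hD
  refine hdiv.of_eq ?_ ?_
  · field_simp
    ring
  · field_simp
    linear_combination (16 * RTT c₁ c₂ p) * hw2


theorem BI_alg (w r rx rt rxx rxt rtt : ℝ) (hw : w ≠ 0) (hr : w ^ 2 = r)
    (hN : (16 * r - rt ^ 2) * (2 * r * rxx - rx ^ 2) + 2 * rx * rt * (2 * r * rxt - rx * rt)
      - (16 * r + rx ^ 2) * (2 * r * rtt - rt ^ 2) = 0) :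
    (1 - (rt / (4 * w)) ^ 2) * ((2 * r * rxx - rx ^ 2) / (8 * w ^ 3))
      + 2 * (rx / (4 * w)) * (rt / (4 * w)) * ((2 * r * rxt - rx * rt) / (8 * w ^ 3))
      - (1 + (rx / (4 * w)) ^ 2) * ((2 * r * rtt - rt ^ 2) / (8 * w ^ 3)) = 0 := by
  subst hr
  field_simp
  linear_combination hN

theorem N_zero {a : ℝ} (A B x : ℝ) (ha : a ≠ 0) (hAB : A * B = 1) :
    (16 * (2 * a * A + 8 * a ^ 3 * B - 4 * x ^ 2 - 8 * a ^ 2) - (-2 * A + 8 * a ^ 2 * B) ^ 2) *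
        (2 * (2 * a * A + 8 * a ^ 3 * B - 4 * x ^ 2 - 8 * a ^ 2) * (-8) - (-8 * x) ^ 2)
      + 2 * (-8 * x) * (-2 * A + 8 * a ^ 2 * B) *
        (2 * (2 * a * A + 8 * a ^ 3 * B - 4 * x ^ 2 - 8 * a ^ 2) * 0
          - (-8 * x) * (-2 * A + 8 * a ^ 2 * B))
      - (16 * (2 * a * A + 8 * a ^ 3 * B - 4 * x ^ 2 - 8 * a ^ 2) + (-8 * x) ^ 2) *
        (2 * (2 * a * A + 8 * a ^ 3 * B - 4 * x ^ 2 - 8 * a ^ 2) * (2 * A / a + 8 * a * B)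
          - (-2 * A + 8 * a ^ 2 * B) ^ 2) = 0 := by
  field_simp
  linear_combination (8192 * a ^ 3 * x ^ 2 - 4096 * a ^ 4 * A + 16384 * a ^ 5
    - 16384 * a ^ 6 * B) * hAB

end BIv5aux

open BIv5aux

/-- Second group-invariant solution associated to the rotation symmetry
`v₅ = −u∂ₓ + x∂_u`:
`u = ½√(2c₁ e^{−(t+c₂)/c₁} + 8c₁³ e^{(t+c₂)/c₁} − 4x² − 8c₁²)`. -/
theorem bornInfeld_invariant_solution_v5_second
    (c₁ c₂ : ℝ) (hc₁ : c₁ ≠ 0) :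
    IsBISolution
      (fun p : ℝ × ℝ => (1 / 2) * Real.sqrt
        (2 * c₁ * Real.exp (-((p.2 + c₂) / c₁)) + 8 * c₁ ^ 3 * Real.exp ((p.2 + c₂) / c₁)
          - 4 * p.1 ^ 2 - 8 * c₁ ^ 2))
      {p : ℝ × ℝ |
        2 * c₁ * Real.exp (-((p.2 + c₂) / c₁)) + 8 * c₁ ^ 3 * Real.exp ((p.2 + c₂) / c₁)
          - 4 * p.1 ^ 2 - 8 * c₁ ^ 2 > 0} := by

  have hRc : ContDiff ℝ 2 (R c₁ c₂) := by
    unfold R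
    fun_prop (disch := intros; exact hc₁)
  show IsBISolution (fun q => 1 / 2 * Real.sqrt (R c₁ c₂ q)) {q | 0 < R c₁ c₂ q}
  set u : ℝ × ℝ → ℝ := fun q => 1 / 2 * Real.sqrt (R c₁ c₂ q) with hu
  have hOpen : IsOpen {q : ℝ × ℝ | 0 < R c₁ c₂ q} := isOpen_lt continuous_const hRc.continuous
  constructor
  · refine ⟨{q | 0 < R c₁ c₂ q}, hOpen, fun q hq => hq, fun q hq => ?_⟩
    exact (contDiffAt_const.mul
      ((Real.contDiffAt_sqrt (ne_of_gt hq)).comp q hRc.contDiffAt)).contDiffWithinAt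
  · intro p hp
    have hp' : 0 < R c₁ c₂ p := hp
    have hne : R c₁ c₂ p ≠ 0 := ne_of_gt hp'
    have hw : Real.sqrt (R c₁ c₂ p) ≠ 0 := ne_of_gt (Real.sqrt_pos.2 hp')
    have hw2 : Real.sqrt (R c₁ c₂ p) ^ 2 = R c₁ c₂ p := Real.sq_sqrt hp'.le
    have hmem : {q : ℝ × ℝ | 0 < R c₁ c₂ q} ∈ nhds p := hOpen.mem_nhds hp'
    have e1 : px u p = -8 * p.1 / (4 * Real.sqrt (R c₁ c₂ p)) :=
      (hp_u c₁ c₂ hc₁ p hne).px_eq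
    have e2 : pt u p = RT c₁ c₂ p / (4 * Real.sqrt (R c₁ c₂ p)) :=
      (hp_u c₁ c₂ hc₁ p hne).pt_eq
    have evx : px u =ᶠ[nhds p] UX c₁ c₂ :=
      Filter.eventuallyEq_of_mem hmem fun q hq => (hp_u c₁ c₂ hc₁ q (ne_of_gt hq)).px_eq
    have evt : pt u =ᶠ[nhds p] UT c₁ c₂ :=
      Filter.eventuallyEq_of_mem hmem fun q hq => (hp_u c₁ c₂ hc₁ q (ne_of_gt hq)).pt_eq
    have e3 : px (px u) p
        = (2 * R c₁ c₂ p * (-8) - (-8 * p.1) ^ 2) / (8 * Real.sqrt (R c₁ c₂ p) ^ 3) := by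
      have h' : px (px u) p = px (UX c₁ c₂) p := by
        show fderiv ℝ (px u) p (1, 0) = fderiv ℝ (UX c₁ c₂) p (1, 0)
        rw [evx.fderiv_eq]
      rw [h']; exact (hp_UX c₁ c₂ hc₁ p hp').px_eq
    have e4 : px (pt u) p
        = (2 * R c₁ c₂ p * 0 - (-8 * p.1) * RT c₁ c₂ p) / (8 * Real.sqrt (R c₁ c₂ p) ^ 3) := by
      have h' : px (pt u) p = px (UT c₁ c₂) p := by
        show fderiv ℝ (pt u) p (1, 0) = fderiv ℝ (UT c₁ c₂) p (1, 0)
        rw [evt.fderiv_eq]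
      rw [h']; exact (hp_UT c₁ c₂ hc₁ p hp').px_eq
    have e5 : pt (pt u) p
        = (2 * R c₁ c₂ p * RTT c₁ c₂ p - RT c₁ c₂ p ^ 2) / (8 * Real.sqrt (R c₁ c₂ p) ^ 3) := by
      have h' : pt (pt u) p = pt (UT c₁ c₂) p := by
        show fderiv ℝ (pt u) p (0, 1) = fderiv ℝ (UT c₁ c₂) p (0, 1)
        rw [evt.fderiv_eq]
      rw [h']; exact (hp_UT c₁ c₂ hc₁ p hp').pt_eq
    rw [e1, e2, e3, e4, e5]
    refine BI_alg (Real.sqrt (R c₁ c₂ p)) (R c₁ c₂ p) (-8 * p.1) (RT c₁ c₂ p) (-8) 0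
      (RTT c₁ c₂ p) hw hw2 ?_
    have hAB : Real.exp (-((p.2 + c₂) / c₁)) * Real.exp ((p.2 + c₂) / c₁) = 1 := by
      rw [← Real.exp_add]; simp
    unfold R RT RTT
    exact N_zero _ _ _ hc₁ hAB
end
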